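/- arXiv:0902.0937 — 2 statements merged into one kernel-verified Lean document; each statement's English description precedes it below -/
import Mathlib

section
/- Let n ≥ 1 and let A be an MR-subalgebra of 𝓛ₙ with tp(A) = ⟨t₁, …, tₙ⟩ and k = Σᵢ tᵢ. Let ρ : Stab(A) → Aut(A) be the group homomorphism given by restriction, φ ↦ φ|A, where Stab(A) = {φ ∈ Aut(𝓛ₙ) : φ[A] = A}. Then the image of ρ has cardinality 2^{k} · ∏_{i=1}^{n} tᵢ!. -/
@[ext] structure Cube (n : ℕ) where
  pos : Finset (Fin n)
  neg : Finset (Fin n)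
  disj : Disjoint pos neg

namespace Cube
variable {n : ℕ}

instance : PartialOrder (Cube n) where
  le x y := y.pos ⊆ x.pos ∧ y.neg ⊆ x.neg
  le_refl x := ⟨subset_rfl, subset_rfl⟩
  le_trans x y z h₁ h₂ := ⟨h₂.1.trans h₁.1, h₂.2.trans h₁.2⟩
  le_antisymm x y h₁ h₂ :=
    Cube.ext (subset_antisymm h₂.1 h₁.1) (subset_antisymm h₂.2 h₁.2)

instance : OrderTop (Cube n) where
  top := ⟨∅, ∅, by simp⟩
  le_top x := ⟨Finset.empty_subset _, Finset.empty_subset _⟩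

instance : SemilatticeSup (Cube n) where
  sup x y := ⟨x.pos ∩ y.pos, x.neg ∩ y.neg,
    x.disj.mono Finset.inter_subset_left Finset.inter_subset_left⟩
  le_sup_left x y := ⟨Finset.inter_subset_left, Finset.inter_subset_left⟩
  le_sup_right x y := ⟨Finset.inter_subset_right, Finset.inter_subset_right⟩
  sup_le x y z hx hy := ⟨Finset.subset_inter hx.1 hy.1, Finset.subset_inter hx.2 hy.2⟩

/-- The reflection `Δ(x, y)` of `y` through the centre of `x`. -/
def delta (x y : Cube n) : Cube n :=
  ⟨x.pos ∪ (y.neg \ x.neg), x.neg ∪ (y.pos \ x.pos), by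
    simp only [Finset.disjoint_union_left, Finset.disjoint_union_right]
    refine ⟨⟨x.disj, Finset.sdiff_disjoint⟩, Finset.disjoint_sdiff, ?_⟩
    exact y.disj.symm.mono Finset.sdiff_subset Finset.sdiff_subset⟩

lemma delta_le (x y : Cube n) : delta x y ≤ x :=
  ⟨Finset.subset_union_left, Finset.subset_union_left⟩

/-- The co-rank of a face of the `n`-cube. -/
def corank (x : Cube n) : ℕ := (x.pos ∪ x.neg).card

/-- The set of coatoms of `𝓛ₙ` lying above `a`. -/
def coatomsAbove (a : Cube n) : Set (Cube n) := {c | corank c = 1 ∧ a ≤ c}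

/-- `A` is an MR-subalgebra of `𝓛ₙ`. -/
def IsMRSub (A : Set (Cube n)) : Prop :=
  ⊤ ∈ A ∧ (∀ x ∈ A, ∀ y ∈ A, x ⊔ y ∈ A) ∧
    (∀ x ∈ A, ∀ y ∈ A, y ≤ x → delta x y ∈ A) ∧
    (∀ x ∈ A, ∀ y ∈ A, ∃ m ∈ A, IsGLB {x, delta (x ⊔ y) y} m)

/-- The coatoms of a subalgebra `A`: maximal elements of `A \ {⊤}`. -/
def coAt (A : Set (Cube n)) : Set (Cube n) :=
  {a | a ∈ A ∧ a ≠ ⊤ ∧ ∀ b ∈ A, b ≠ ⊤ → a ≤ b → b = a}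

/-- The coatoms `a` of `A` with `|𝒞ₐ| = i`. -/
def typeSet (A : Set (Cube n)) (i : ℕ) : Set (Cube n) :=
  {a | a ∈ coAt A ∧ (coatomsAbove a).ncard = i}

/-- An order automorphism of `𝓛ₙ` is a cubic automorphism when it preserves `Δ`. -/
def IsAut (φ : Cube n ≃o Cube n) : Prop :=
  ∀ x y : Cube n, y ≤ x → φ (delta x y) = delta (φ x) (φ y)

/-- The set of automorphisms of `𝓛ₙ`. -/
def AutSet (n : ℕ) : Set (Cube n ≃o Cube n) := {φ | IsAut φ}

/-- An automorphism of the subposet `A` preserving `Δ`. -/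
def IsSubAut {A : Set (Cube n)} (ψ : A ≃o A) : Prop :=
  ∀ (x y : A), (y : Cube n) ≤ (x : Cube n) → ∀ h : delta ↑x ↑y ∈ A,
    (ψ ⟨delta ↑x ↑y, h⟩ : Cube n) = delta ↑(ψ x) ↑(ψ y)

end Cube



namespace Cube
variable {n : ℕ}

-- new material
instance : DecidableEq (Cube n) := fun x y =>
  decidable_of_iff (x.pos = y.pos ∧ x.neg = y.neg) (by cases x; cases y; simp)

noncomputable instance : Fintype (Cube n) :=
  Fintype.ofInjective (fun x : Cube n => (x.pos, x.neg)) (by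
    intro x y h; cases x; cases y; simpa [Cube.mk.injEq, Prod.ext_iff] using h)

/-- The sign of coordinate `i` in `x`. -/
def sign (x : Cube n) (i : Fin n) : Option Bool :=
  if i ∈ x.pos then some true else if i ∈ x.neg then some false else none

lemma sign_eq_true_iff {x : Cube n} {i : Fin n} : x.sign i = some true ↔ i ∈ x.pos := by
  unfold sign; split_ifs with h1 h2 <;> simp_all

lemma sign_eq_false_iff {x : Cube n} {i : Fin n} : x.sign i = some false ↔ i ∈ x.neg := by
  unfold sign; split_ifs with h1 h2 <;> simp_all
  exact fun h => (Finset.disjoint_left.1 x.disj h1 h)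

lemma sign_eq_none_iff {x : Cube n} {i : Fin n} : x.sign i = none ↔ i ∉ x.pos ∧ i ∉ x.neg := by
  unfold sign; split_ifs with h1 h2 <;> simp_all

lemma mem_pos_iff_sign {x : Cube n} {i : Fin n} : i ∈ x.pos ↔ x.sign i = some true :=
  sign_eq_true_iff.symm

lemma mem_neg_iff_sign {x : Cube n} {i : Fin n} : i ∈ x.neg ↔ x.sign i = some false :=
  sign_eq_false_iff.symm

lemma sign_eq_some_iff {x : Cube n} {i : Fin n} {b : Bool} :
    x.sign i = some b ↔ (b = true ∧ i ∈ x.pos) ∨ (b = false ∧ i ∈ x.neg) := by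
  cases b
  · simp [sign_eq_false_iff]
  · simp [sign_eq_true_iff]

lemma ext_sign {x y : Cube n} (h : ∀ i, x.sign i = y.sign i) : x = y := by
  ext i
  · rw [mem_pos_iff_sign, mem_pos_iff_sign, h]
  · rw [mem_neg_iff_sign, mem_neg_iff_sign, h]

lemma le_iff_sign {x y : Cube n} : x ≤ y ↔ ∀ i b, y.sign i = some b → x.sign i = some b := by
  constructor
  · rintro ⟨hp, hn⟩ i b hb
    rcases sign_eq_some_iff.1 hb with ⟨rfl, h⟩ | ⟨rfl, h⟩
    · exact sign_eq_true_iff.2 (hp h)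
    · exact sign_eq_false_iff.2 (hn h)
  · intro h
    constructor
    · intro i hi; exact sign_eq_true_iff.1 (h i true (sign_eq_true_iff.2 hi))
    · intro i hi; exact sign_eq_false_iff.1 (h i false (sign_eq_false_iff.2 hi))

@[simp] lemma sign_top (i : Fin n) : (⊤ : Cube n).sign i = none := by
  have h1 : (⊤ : Cube n).pos = ∅ := rfl
  have h2 : (⊤ : Cube n).neg = ∅ := rfl
  simp [sign, h1, h2]

@[simp] lemma sign_sup (x y : Cube n) (i : Fin n) :
    (x ⊔ y).sign i = if x.sign i = y.sign i then x.sign i else none := by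
  have hp : (x ⊔ y).pos = x.pos ∩ y.pos := rfl
  have hn : (x ⊔ y).neg = x.neg ∩ y.neg := rfl
  have d1 : i ∈ x.pos → i ∉ x.neg := fun h => Finset.disjoint_left.1 x.disj h
  have d2 : i ∈ y.pos → i ∉ y.neg := fun h => Finset.disjoint_left.1 y.disj h
  unfold sign
  rw [hp, hn]
  simp only [Finset.mem_inter]
  by_cases h1 : i ∈ x.pos <;> by_cases h2 : i ∈ x.neg <;>
    by_cases h3 : i ∈ y.pos <;> by_cases h4 : i ∈ y.neg <;> simp_all

@[simp] lemma sign_delta (x y : Cube n) (i : Fin n) :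
    (delta x y).sign i = ((x.sign i).elim ((y.sign i).map not) some) := by
  have hp : (delta x y).pos = x.pos ∪ (y.neg \ x.neg) := rfl
  have hn : (delta x y).neg = x.neg ∪ (y.pos \ x.pos) := rfl
  have d1 : i ∈ x.pos → i ∉ x.neg := fun h => Finset.disjoint_left.1 x.disj h
  have d2 : i ∈ y.pos → i ∉ y.neg := fun h => Finset.disjoint_left.1 y.disj h
  unfold sign
  rw [hp, hn]
  simp only [Finset.mem_union, Finset.mem_sdiff]
  by_cases h1 : i ∈ x.pos <;> by_cases h2 : i ∈ x.neg <;>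
    by_cases h3 : i ∈ y.pos <;> by_cases h4 : i ∈ y.neg <;> simp_all

/-- antipode -/
def anti (x : Cube n) : Cube n := ⟨x.neg, x.pos, x.disj.symm⟩

@[simp] lemma sign_anti (x : Cube n) (i : Fin n) : (anti x).sign i = (x.sign i).map not := by
  have hp : (anti x).pos = x.neg := rfl
  have hn : (anti x).neg = x.pos := rfl
  have d1 : i ∈ x.pos → i ∉ x.neg := fun h => Finset.disjoint_left.1 x.disj h
  unfold sign
  rw [hp, hn]
  by_cases h1 : i ∈ x.pos <;> by_cases h2 : i ∈ x.neg <;> simp_all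

@[simp] lemma anti_anti (x : Cube n) : anti (anti x) = x := rfl

lemma anti_injective : Function.Injective (anti (n := n)) := fun x y h => by
  have := congrArg anti h; simpa using this

@[simp] lemma anti_top : anti (⊤ : Cube n) = ⊤ := rfl

lemma anti_le_anti {x y : Cube n} (h : x ≤ y) : anti x ≤ anti y := ⟨h.2, h.1⟩

lemma anti_le_anti_iff {x y : Cube n} : anti x ≤ anti y ↔ x ≤ y :=
  ⟨fun h => ⟨h.2, h.1⟩, anti_le_anti⟩

lemma anti_eq_delta_top (x : Cube n) : anti x = delta ⊤ x := by
  apply ext_sign; intro i; simp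

/-- support -/
def supp (x : Cube n) : Finset (Fin n) := x.pos ∪ x.neg

lemma mem_supp_iff {x : Cube n} {i : Fin n} : i ∈ supp x ↔ x.sign i ≠ none := by
  rw [supp, Finset.mem_union, Ne, sign_eq_none_iff]; tauto

lemma mem_supp_iff' {x : Cube n} {i : Fin n} : i ∈ supp x ↔ ∃ b, x.sign i = some b := by
  rw [mem_supp_iff]; cases h : x.sign i <;> simp

@[simp] lemma supp_anti (x : Cube n) : supp (anti x) = supp x := Finset.union_comm _ _

@[simp] lemma supp_top : supp (⊤ : Cube n) = ∅ := rfl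

lemma eq_top_iff_sign {x : Cube n} : x = ⊤ ↔ ∀ i, x.sign i = none := by
  constructor
  · rintro rfl i; simp
  · intro h; exact ext_sign (fun i => by simp [h i])

lemma eq_top_iff_supp {x : Cube n} : x = ⊤ ↔ supp x = ∅ := by
  rw [eq_top_iff_sign, Finset.eq_empty_iff_forall_notMem]
  simp only [mem_supp_iff, not_not]

lemma sign_eq_of_le {x y : Cube n} (h : x ≤ y) {i : Fin n} (hi : i ∈ supp y) :
    x.sign i = y.sign i := by
  obtain ⟨b, hb⟩ := mem_supp_iff'.1 hi
  rw [hb, le_iff_sign.1 h i b hb]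

lemma supp_subset_of_le {x y : Cube n} (h : x ≤ y) : supp y ⊆ supp x := by
  intro i hi
  rw [mem_supp_iff] at hi ⊢
  rw [sign_eq_of_le h (mem_supp_iff.2 hi)]; exact hi

lemma anti_ne_self {x : Cube n} (h : x ≠ ⊤) : anti x ≠ x := by
  intro hc
  apply h
  rw [eq_top_iff_sign]
  intro i
  have := congrArg (fun z => sign z i) hc
  simp only [sign_anti] at this
  cases h' : x.sign i with
  | none => rfl
  | some b => rw [h'] at this; cases b <;> simp at this

/-- delta x y is the GLB of the caret pair -/
lemma sign_delta' (x y : Cube n) (i : Fin n) :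
    (delta x y).sign i = (x.sign i).elim ((y.sign i).map not) some := sign_delta x y i

lemma delta_le_caret (x y : Cube n) : delta x y ≤ delta (x ⊔ y) y := by
  rw [le_iff_sign]
  intro i b hb
  simp only [sign_delta, sign_sup] at hb ⊢
  cases hx : x.sign i with
  | none => cases hy : y.sign i <;> simp_all
  | some bx =>
    cases hy : y.sign i with
    | none => simp_all
    | some by' =>
      by_cases hxy : bx = by' <;> cases bx <;> cases by' <;> simp_all

lemma isGLB_caret (x y : Cube n) : IsGLB {x, delta (x ⊔ y) y} (delta x y) := by
  constructor
  · rintro z (rfl | rfl)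
    · exact delta_le z y
    · exact delta_le_caret _ _
  · intro z hz
    have hzx : z ≤ x := hz (by simp)
    have hzc : z ≤ delta (x ⊔ y) y := hz (by simp)
    rw [le_iff_sign]
    intro i b hb
    simp only [sign_delta] at hb
    cases hx : x.sign i with
    | some bx =>
      rw [hx] at hb; simp only [Option.elim] at hb
      exact le_iff_sign.1 hzx i b (by rw [hx, hb])
    | none =>
      rw [hx] at hb; simp only [Option.elim] at hb
      apply le_iff_sign.1 hzc i b
      simp [sign_delta, sign_sup, hx]
      cases hy : y.sign i with
      | none => rw [hy] at hb; simp at hb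
      | some by' => rw [hy] at hb; simp_all

section MR
variable {A : Set (Cube n)}

lemma IsMRSub.delta_mem (hA : IsMRSub A) {x y : Cube n} (hx : x ∈ A) (hy : y ∈ A) :
    delta x y ∈ A := by
  obtain ⟨m, hm, hglb⟩ := hA.2.2.2 x hx y hy
  rwa [hglb.unique (isGLB_caret x y)] at hm

lemma IsMRSub.anti_mem (hA : IsMRSub A) {x : Cube n} (hx : x ∈ A) : anti x ∈ A := by
  rw [anti_eq_delta_top]; exact hA.delta_mem hA.1 hx

lemma coAt_mem {a : Cube n} (h : a ∈ coAt A) : a ∈ A := h.1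
lemma coAt_ne_top {a : Cube n} (h : a ∈ coAt A) : a ≠ ⊤ := h.2.1
lemma coAt_max {a : Cube n} (h : a ∈ coAt A) : ∀ b ∈ A, b ≠ ⊤ → a ≤ b → b = a := h.2.2

lemma anti_ne_top {x : Cube n} (h : x ≠ ⊤) : anti x ≠ ⊤ := by
  intro hc; exact h (by rw [← anti_anti x, hc, anti_top])

lemma IsMRSub.anti_coAt (hA : IsMRSub A) {a : Cube n} (h : a ∈ coAt A) : anti a ∈ coAt A := by
  refine ⟨hA.anti_mem h.1, anti_ne_top h.2.1, ?_⟩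
  intro b hb hbt hab
  have h1 : a ≤ anti b := by
    rw [← anti_anti a] at hab ⊢
    exact anti_le_anti hab
  have := h.2.2 (anti b) (hA.anti_mem hb) (anti_ne_top hbt) h1
  rw [← this, anti_anti]

lemma exists_coAt_le (hA : IsMRSub A) {x : Cube n} (hx : x ∈ A) (hxt : x ≠ ⊤) :
    ∃ a ∈ coAt A, x ≤ a := by
  classical
  have hS : ({b ∈ A | x ≤ b ∧ b ≠ ⊤} : Set (Cube n)).Finite := Set.toFinite _
  obtain ⟨a, ha, hmax⟩ := Set.Finite.exists_maximalFor id _ hS ⟨x, hx, le_refl x, hxt⟩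
  refine ⟨a, ⟨ha.1, ha.2.2, ?_⟩, ha.2.1⟩
  intro b hb hbt hab
  exact le_antisymm (hmax ⟨hb, ha.2.1.trans hab, hbt⟩ hab) hab

lemma IsMRSub.sup_coAt_eq_top (hA : IsMRSub A) {a b : Cube n}
    (ha : a ∈ coAt A) (hb : b ∈ coAt A) (hne : a ≠ b) : a ⊔ b = ⊤ := by
  by_contra hc
  have h1 : a ⊔ b ∈ A := hA.2.1 a ha.1 b hb.1
  have h2 := ha.2.2 _ h1 hc le_sup_left
  have h3 := hb.2.2 _ h1 hc le_sup_right
  exact hne (h2.symm.trans h3)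

lemma IsMRSub.supp_disjoint (hA : IsMRSub A) {a b : Cube n}
    (ha : a ∈ coAt A) (hb : b ∈ coAt A) (hne : b ≠ a) (hne' : b ≠ anti a) :
    Disjoint (supp a) (supp b) := by
  rw [Finset.disjoint_left]
  intro i hia hib
  by_contra
  obtain ⟨s, hs⟩ := mem_supp_iff'.1 hia
  obtain ⟨s', hs'⟩ := mem_supp_iff'.1 hib
  have htop := hA.sup_coAt_eq_top ha hb (Ne.symm hne)
  have hne2 : a ≠ anti b := fun hc => hne' (by rw [hc, anti_anti])
  have htop2 := hA.sup_coAt_eq_top ha (hA.anti_coAt hb) hne2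
  have h1 : (a ⊔ b).sign i = none := by rw [htop]; simp
  rw [sign_sup] at h1
  have hss' : s' = !s := by
    by_cases h : s = s'
    · subst h; rw [hs, hs'] at h1; simp at h1
    · cases s <;> cases s' <;> simp_all
  have h2 : (a ⊔ anti b).sign i = none := by rw [htop2]; simp
  rw [sign_sup] at h2
  rw [hs, sign_anti, hs', hss'] at h2
  cases s <;> simp_all

lemma IsMRSub.exists_coAt_supp_aux (hA : IsMRSub A) :
    ∀ N : ℕ, ∀ x ∈ A, (supp x).card ≤ N → ∀ i ∈ supp x, ∃ a ∈ coAt A, x ≤ a ∧ i ∈ supp a := by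
  intro N
  induction N with
  | zero =>
    intro x _ hcard i hi
    rw [Nat.le_zero, Finset.card_eq_zero] at hcard
    rw [hcard] at hi; simp at hi
  | succ N ih =>
    intro x hx hcard i hi
    have hxt : x ≠ ⊤ := by
      intro rfl'; rw [rfl'] at hi; simp [supp] at hi
      rcases hi with h | h
      · exact absurd h (by simp [show (⊤ : Cube n).pos = ∅ from rfl])
      · exact absurd h (by simp [show (⊤ : Cube n).neg = ∅ from rfl])
    obtain ⟨a, haA, hxa⟩ := exists_coAt_le hA hx hxt
    by_cases hia : i ∈ supp a
    · exact ⟨a, haA, hxa, hia⟩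
    · set x₁ := x ⊔ anti (delta a x) with hx₁
      have hx₁A : x₁ ∈ A := hA.2.1 x hx _ (hA.anti_mem (hA.delta_mem haA.1 hx))
      have hsign : ∀ j, x₁.sign j = if j ∈ supp a then none else x.sign j := by
        intro j
        by_cases hj : j ∈ supp a
        · obtain ⟨s, hs⟩ := mem_supp_iff'.1 hj
          have hxs : x.sign j = some s := by rw [sign_eq_of_le hxa hj, hs]
          rw [if_pos hj, hx₁]
          simp only [sign_sup, sign_anti, sign_delta, hs, hxs, Option.elim]
          cases s <;> simp
        · have has : a.sign j = none := by
            by_contra hc; exact hj (mem_supp_iff.2 hc)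
          rw [if_neg hj, hx₁]
          simp only [sign_sup, sign_anti, sign_delta, has, Option.elim]
          cases hxj : x.sign j <;> simp
      have hsupp : supp x₁ = supp x \ supp a := by
        ext j
        rw [Finset.mem_sdiff, mem_supp_iff, mem_supp_iff, hsign j]
        by_cases hj : j ∈ supp a <;> simp [hj]
      have hsa : supp a ⊆ supp x := supp_subset_of_le hxa
      have hane : (supp a).Nonempty := by
        rw [Finset.nonempty_iff_ne_empty]
        intro hc; exact haA.2.1 (eq_top_iff_supp.2 hc)
      have hcard1 : (supp x₁).card ≤ N := by
        rw [hsupp, Finset.card_sdiff_of_subset hsa]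
        obtain ⟨j, hj⟩ := hane
        have h1 : 1 ≤ (supp a).card := Finset.card_pos.2 ⟨j, hj⟩
        omega
      have hix₁ : i ∈ supp x₁ := by rw [hsupp, Finset.mem_sdiff]; exact ⟨hi, hia⟩
      have hxx₁ : x ≤ x₁ := by
        rw [le_iff_sign]
        intro j b hb
        rw [hsign j] at hb
        by_cases hj : j ∈ supp a
        · rw [if_pos hj] at hb; simp at hb
        · rwa [if_neg hj] at hb
      obtain ⟨b, hbA, hb1, hb2⟩ := ih x₁ hx₁A hcard1 i hix₁
      exact ⟨b, hbA, hxx₁.trans hb1, hb2⟩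

lemma IsMRSub.exists_coAt_supp (hA : IsMRSub A) {x : Cube n} (hx : x ∈ A) {i : Fin n}
    (hi : i ∈ supp x) : ∃ a ∈ coAt A, x ≤ a ∧ i ∈ supp a :=
  hA.exists_coAt_supp_aux (supp x).card x hx le_rfl i hi

lemma IsMRSub.eq_of_coAt_le_iff (hA : IsMRSub A) {x y : Cube n} (hx : x ∈ A) (hy : y ∈ A)
    (h : ∀ a ∈ coAt A, x ≤ a ↔ y ≤ a) : x = y := by
  have key : ∀ u v : Cube n, u ∈ A → v ∈ A → (∀ a ∈ coAt A, u ≤ a ↔ v ≤ a) → u ≤ v := by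
    intro u v hu hv huv
    rw [le_iff_sign]
    intro i b hb
    have hi : i ∈ supp v := mem_supp_iff.2 (by rw [hb]; simp)
    obtain ⟨a, haA, hva, hia⟩ := hA.exists_coAt_supp hv hi
    have h1 : a.sign i = some b := by rw [← sign_eq_of_le hva hia, hb]
    have h2 : u ≤ a := (huv a haA).2 hva
    exact le_iff_sign.1 h2 i b h1
  exact le_antisymm (key x y hx hy h) (key y x hy hx (fun a ha => (h a ha).symm))

lemma IsMRSub.assemble_mem (hA : IsMRSub A) (T : Finset (Cube n)) (hT : ∀ a ∈ T, a ∈ A)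
    (y : Cube n) (hpos : y.pos = T.sup Cube.pos) (hneg : y.neg = T.sup Cube.neg) : y ∈ A := by
  classical
  induction T using Finset.induction_on generalizing y with
  | empty =>
    have : y = ⊤ := Cube.ext (by simpa [show (⊤ : Cube n).pos = ∅ from rfl] using hpos) (by simpa [show (⊤ : Cube n).neg = ∅ from rfl] using hneg)
    rw [this]; exact hA.1
  | @insert a T ha ih =>
    have hT' : ∀ b ∈ T, b ∈ A := fun b hb => hT b (Finset.mem_insert_of_mem hb)
    have haA : a ∈ A := hT a (Finset.mem_insert_self a T)
    have hsubp : T.sup Cube.pos ⊆ y.pos := by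
      rw [hpos, Finset.sup_insert]; exact Finset.subset_union_right
    have hsubn : T.sup Cube.neg ⊆ y.neg := by
      rw [hneg, Finset.sup_insert]; exact Finset.subset_union_right
    set y' : Cube n := ⟨T.sup Cube.pos, T.sup Cube.neg, y.disj.mono hsubp hsubn⟩ with hy'
    have hy'A : y' ∈ A := ih hT' y' rfl rfl
    have hapos : a.pos ⊆ y.pos := by
      rw [hpos, Finset.sup_insert]; exact Finset.subset_union_left
    have haneg : a.neg ⊆ y.neg := by
      rw [hneg, Finset.sup_insert]; exact Finset.subset_union_left
    have key : y = delta y' (anti a) := by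
      have e1 : a.pos \ T.sup Cube.neg = a.pos := by
        rw [Finset.sdiff_eq_self_iff_disjoint]
        exact (y.disj.mono hapos hsubn)
      have e2 : a.neg \ T.sup Cube.pos = a.neg := by
        rw [Finset.sdiff_eq_self_iff_disjoint]
        exact (y.disj.symm.mono haneg hsubp)
      apply Cube.ext
      · show y.pos = y'.pos ∪ ((anti a).neg \ y'.neg)
        rw [hpos, Finset.sup_insert]
        show a.pos ⊔ T.sup Cube.pos = T.sup Cube.pos ∪ (a.pos \ T.sup Cube.neg)
        rw [e1]
        exact Finset.union_comm _ _
      · show y.neg = y'.neg ∪ ((anti a).pos \ y'.pos)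
        rw [hneg, Finset.sup_insert]
        show a.neg ⊔ T.sup Cube.neg = T.sup Cube.neg ∪ (a.neg \ T.sup Cube.pos)
        rw [e2]
        exact Finset.union_comm _ _
    rw [key]
    exact hA.delta_mem hy'A (hA.anti_mem haA)

end MR

/-- corank-1 faces -/
def single (i : Fin n) (s : Bool) : Cube n :=
  ⟨if s then {i} else ∅, if s then ∅ else {i}, by cases s <;> simp⟩

lemma sign_single (i : Fin n) (s : Bool) (j : Fin n) :
    (single i s).sign j = if j = i then some s else none := by
  have hp : (single i s).pos = if s then {i} else ∅ := rfl
  have hn : (single i s).neg = if s then ∅ else {i} := rfl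
  unfold sign
  rw [hp, hn]
  cases s <;> by_cases hj : j = i <;> simp [hj, Finset.mem_singleton]

lemma supp_single (i : Fin n) (s : Bool) : supp (single i s) = {i} := by
  ext j
  rw [mem_supp_iff, sign_single]
  by_cases hj : j = i <;> simp [hj]

lemma corank_eq_supp_card (x : Cube n) : corank x = (supp x).card := rfl

lemma eq_of_supp_subset {b c : Cube n} (h : c ≤ b) (hs : supp c ⊆ supp b) : b = c := by
  apply ext_sign
  intro j
  by_cases hj : j ∈ supp b
  · exact (sign_eq_of_le h hj).symm
  · have h1 : b.sign j = none := by
      by_contra hc; exact hj (mem_supp_iff.2 hc)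
    have h2 : c.sign j = none := by
      by_contra hc; exact hj (hs (mem_supp_iff.2 hc))
    rw [h1, h2]

lemma corank_eq_one_iff {c : Cube n} :
    corank c = 1 ↔ c ≠ ⊤ ∧ ∀ b, c ≤ b → b = c ∨ b = ⊤ := by
  rw [corank_eq_supp_card]
  constructor
  · intro h
    obtain ⟨i, hi⟩ := Finset.card_eq_one.1 h
    have htop : c ≠ ⊤ := by
      intro hc
      rw [hc, supp_top] at hi
      exact absurd hi.symm (Finset.singleton_ne_empty i)
    refine ⟨htop, ?_⟩
    intro b hb
    have hsub : supp b ⊆ supp c := supp_subset_of_le hb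
    rcases Finset.eq_empty_or_nonempty (supp b) with he | hne
    · exact Or.inr (eq_top_iff_supp.2 he)
    · left
      apply eq_of_supp_subset hb
      rw [hi] at hsub ⊢
      obtain ⟨j, hj⟩ := hne
      have : j = i := Finset.mem_singleton.1 (hsub hj)
      intro m hm
      rw [Finset.mem_singleton] at hm
      rw [hm, ← this]; exact hj
  · rintro ⟨ht, h⟩
    have hne : (supp c).Nonempty := by
      rw [Finset.nonempty_iff_ne_empty]
      exact fun hc => ht (eq_top_iff_supp.2 hc)
    obtain ⟨i, hi⟩ := hne
    obtain ⟨s, hs⟩ := mem_supp_iff'.1 hi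
    have hle : c ≤ single i s := by
      rw [le_iff_sign]
      intro j b hb
      rw [sign_single] at hb
      by_cases hj : j = i
      · subst hj
        rw [if_pos rfl] at hb
        rw [hs]; exact hb.symm ▸ rfl
      · rw [if_neg hj] at hb; simp at hb
    have hst : single i s ≠ ⊤ := by
      intro hc
      have := congrArg (fun z => sign z i) hc
      simp [sign_single] at this
    rcases h (single i s) hle with he | he
    · rw [← he, supp_single]; simp
    · exact absurd he hst

lemma top_not_corank_one : corank (⊤ : Cube n) ≠ 1 := by
  rw [corank_eq_supp_card, supp_top]; simp

lemma card_coatomsAbove (a : Cube n) :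
    (coatomsAbove a).ncard = (supp a).card := by
  classical
  have himg : coatomsAbove a = (fun i => single i ((a.sign i).getD true)) '' ↑(supp a) := by
    ext c
    constructor
    · rintro ⟨h1, h2⟩
      rw [corank_eq_supp_card] at h1
      obtain ⟨i, hi⟩ := Finset.card_eq_one.1 h1
      have hic : i ∈ supp c := by rw [hi]; simp
      obtain ⟨s, hs⟩ := mem_supp_iff'.1 hic
      have has : a.sign i = some s := le_iff_sign.1 h2 i s hs
      have hia : i ∈ supp a := mem_supp_iff.2 (by rw [has]; simp)
      refine ⟨i, by simpa using hia, ?_⟩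
      show single i ((a.sign i).getD true) = c
      rw [has]
      apply (ext_sign ?_).symm
      intro j
      rw [sign_single]
      by_cases hj : j = i
      · subst hj; simp [hs]
      · have : j ∉ supp c := by rw [hi]; simp [hj]
        rw [Option.getD_some]
        rw [if_neg hj]
        by_contra hc
        exact this (mem_supp_iff.2 (fun h => hc (by rw[h])))
    · rintro ⟨i, hi, rfl⟩
      simp only [Finset.coe_sort_coe, Finset.mem_coe] at hi
      obtain ⟨s, hs⟩ := mem_supp_iff'.1 hi
      constructor
      · rw [corank_eq_supp_card, supp_single]; simp
      · rw [le_iff_sign]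
        intro j b hb
        rw [sign_single] at hb
        by_cases hj : j = i
        · subst hj
          rw [if_pos rfl] at hb
          rw [hs] at hb ⊢
          rw [Option.getD_some] at hb
          rw [hb]
        · rw [if_neg hj] at hb; simp at hb
  rw [himg]
  rw [Set.ncard_image_of_injOn, Set.ncard_coe_finset]
  intro i _ j _ hij
  have := congrArg supp hij
  rw [supp_single, supp_single] at this
  simpa using this

lemma corank_one_map (e : Cube n ≃o Cube n) {c : Cube n} (h : corank c = 1) :
    corank (e c) = 1 := by
  rw [corank_eq_one_iff] at h ⊢
  refine ⟨fun hc => h.1 ?_, ?_⟩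
  · have : e c = e ⊤ := by rw [hc, e.map_top]
    exact e.injective this
  · intro b hb
    have h1 : c ≤ e.symm b := by
      have := e.symm.monotone hb
      simpa using this
    rcases h.2 _ h1 with he | he
    · left; rw [← he]; simp
    · right
      have : b = e ⊤ := by rw [← he]; simp
      rw [this, e.map_top]

lemma coatomsAbove_map (e : Cube n ≃o Cube n) (a : Cube n) :
    coatomsAbove (e a) = e '' coatomsAbove a := by
  ext c
  constructor
  · rintro ⟨h1, h2⟩
    refine ⟨e.symm c, ⟨?_, ?_⟩, by simp⟩
    · have := corank_one_map e.symm h1; exact this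
    · have := e.symm.monotone h2; simpa using this
  · rintro ⟨c', ⟨h1, h2⟩, rfl⟩
    exact ⟨corank_one_map e h1, e.monotone h2⟩

lemma ncard_coatomsAbove_map (e : Cube n ≃o Cube n) (a : Cube n) :
    (coatomsAbove (e a)).ncard = (coatomsAbove a).ncard := by
  rw [coatomsAbove_map, Set.ncard_image_of_injective _ e.injective]


/-! ### signed permutation automorphisms -/

lemma map_xor_eq_some {o : Option Bool} {e b : Bool} :
    o.map (fun c => xor e c) = some b ↔ o = some (xor e b) := by
  cases o with
  | none => simp
  | some a => cases a <;> cases e <;> cases b <;> simp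

def ofSign (f : Fin n → Option Bool) : Cube n :=
  ⟨Finset.univ.filter (fun i => f i = some true),
   Finset.univ.filter (fun i => f i = some false), by
    rw [Finset.disjoint_left]
    intro i h1 h2
    simp only [Finset.mem_filter] at h1 h2
    rw [h1.2] at h2; simp at h2⟩

lemma sign_ofSign (f : Fin n → Option Bool) (i : Fin n) : (ofSign f).sign i = f i := by
  have hp : (ofSign f).pos = Finset.univ.filter (fun i => f i = some true) := rfl
  have hn : (ofSign f).neg = Finset.univ.filter (fun i => f i = some false) := rfl
  unfold sign
  rw [hp, hn]
  cases h : f i with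
  | none => simp [h]
  | some b => cases b <;> simp [h]

def spAutFun (σ : Equiv.Perm (Fin n)) (ε : Fin n → Bool) (x : Cube n) : Cube n :=
  ofSign (fun j => (x.sign (σ.symm j)).map (fun c => xor (ε (σ.symm j)) c))

lemma sign_spAutFun (σ : Equiv.Perm (Fin n)) (ε : Fin n → Bool) (x : Cube n) (j : Fin n) :
    (spAutFun σ ε x).sign j
      = (x.sign (σ.symm j)).map (fun c => xor (ε (σ.symm j)) c) := sign_ofSign _ _

lemma sign_spAutFun' (σ : Equiv.Perm (Fin n)) (ε : Fin n → Bool) (x : Cube n) (i : Fin n) :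
    (spAutFun σ ε x).sign (σ i) = (x.sign i).map (fun c => xor (ε i) c) := by
  rw [sign_spAutFun]; simp

def spAut (σ : Equiv.Perm (Fin n)) (ε : Fin n → Bool) : Cube n ≃o Cube n where
  toFun := spAutFun σ ε
  invFun := spAutFun σ⁻¹ (ε ∘ ⇑σ⁻¹)
  left_inv x := by
    apply ext_sign
    intro i
    show (spAutFun σ⁻¹ (ε ∘ ⇑σ⁻¹) (spAutFun σ ε x)).sign i = _
    rw [sign_spAutFun]
    have h1 : (σ⁻¹ : Equiv.Perm (Fin n)).symm i = σ i := rfl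
    rw [h1, sign_spAutFun]
    simp only [Equiv.symm_apply_apply, Option.map_map, Function.comp]
    have h2 : ε (σ⁻¹ (σ i)) = ε i := by simp
    rw [h2]
    cases h : x.sign i with
    | none => simp
    | some b => cases b <;> cases hε : ε i <;> simp [hε]
  right_inv y := by
    apply ext_sign
    intro i
    show (spAutFun σ ε (spAutFun σ⁻¹ (ε ∘ ⇑σ⁻¹) y)).sign i = _
    rw [sign_spAutFun, sign_spAutFun]
    have h1 : (σ⁻¹ : Equiv.Perm (Fin n)).symm (σ.symm i) = i := by
      show σ (σ.symm i) = i; simp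
    rw [h1]
    simp only [Option.map_map, Function.comp]
    have h2 : ε (σ⁻¹ i) = ε (σ.symm i) := rfl
    rw [h2]
    cases h : y.sign i with
    | none => simp
    | some b => cases b <;> cases hε : ε (σ.symm i) <;> simp [hε]
  map_rel_iff' := by
    intro x y
    show spAutFun σ ε x ≤ spAutFun σ ε y ↔ x ≤ y
    constructor
    · intro h
      rw [le_iff_sign]
      intro i b hb
      have h1 : (spAutFun σ ε y).sign (σ i) = some (xor (ε i) b) := by
        rw [sign_spAutFun', hb]; rfl
      have h2 := le_iff_sign.1 h (σ i) _ h1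
      rw [sign_spAutFun'] at h2
      rw [map_xor_eq_some] at h2
      rw [h2]
      congr 1
      cases b <;> cases hε : ε i <;> simp [hε]
    · intro h
      rw [le_iff_sign]
      intro j b hb
      rw [sign_spAutFun] at hb ⊢
      rw [map_xor_eq_some] at hb ⊢
      exact le_iff_sign.1 h _ _ hb

lemma spAut_apply (σ : Equiv.Perm (Fin n)) (ε : Fin n → Bool) (x : Cube n) :
    spAut σ ε x = spAutFun σ ε x := rfl

lemma spAut_symm_apply (σ : Equiv.Perm (Fin n)) (ε : Fin n → Bool) (y : Cube n) :
    (spAut σ ε).symm y = spAutFun σ⁻¹ (ε ∘ ⇑σ⁻¹) y := rfl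

lemma isAut_spAut (σ : Equiv.Perm (Fin n)) (ε : Fin n → Bool) : IsAut (spAut σ ε) := by
  intro x y _
  apply ext_sign
  intro j
  rw [spAut_apply, spAut_apply, spAut_apply, sign_spAutFun, sign_delta, sign_delta,
    sign_spAutFun, sign_spAutFun]
  set i := σ.symm j
  cases hx : x.sign i with
  | none =>
    cases hy : y.sign i with
    | none => simp
    | some b => cases b <;> cases hε : ε i <;> simp [hε]
  | some b =>
    cases hy : y.sign i with
    | none => cases b <;> cases hε : ε i <;> simp [hε]
    | some c => cases b <;> cases c <;> cases hε : ε i <;> simp [hε]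

/-- assembled criterion by signs -/
def Assembled (x : Cube n) (T : Finset (Cube n)) : Prop :=
  x.pos = T.sup Cube.pos ∧ x.neg = T.sup Cube.neg

lemma assembled_iff_sign {x : Cube n} {T : Finset (Cube n)} :
    Assembled x T ↔ ∀ i c, (x.sign i = some c ↔ ∃ a ∈ T, a.sign i = some c) := by
  constructor
  · rintro ⟨hp, hn⟩ i c
    cases c
    · rw [sign_eq_false_iff, hn, Finset.mem_sup]
      simp only [sign_eq_false_iff]
    · rw [sign_eq_true_iff, hp, Finset.mem_sup]
      simp only [sign_eq_true_iff]
  · intro h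
    constructor
    · ext i
      rw [← sign_eq_true_iff, Finset.mem_sup, h i true]
      simp only [sign_eq_true_iff]
    · ext i
      rw [← sign_eq_false_iff, Finset.mem_sup, h i false]
      simp only [sign_eq_false_iff]

lemma assembled_spAut (σ : Equiv.Perm (Fin n)) (ε : Fin n → Bool) {x : Cube n}
    {T : Finset (Cube n)} (h : Assembled x T) :
    Assembled (spAut σ ε x) (T.image (fun a => spAut σ ε a)) := by
  classical
  rw [assembled_iff_sign] at h ⊢
  intro j c
  rw [spAut_apply, sign_spAutFun, map_xor_eq_some, h (σ.symm j) _]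
  constructor
  · rintro ⟨a, ha, hsa⟩
    refine ⟨spAut σ ε a, Finset.mem_image_of_mem _ ha, ?_⟩
    rw [spAut_apply, sign_spAutFun, map_xor_eq_some, hsa]
  · rintro ⟨b, hb, hsb⟩
    obtain ⟨a, ha, rfl⟩ := Finset.mem_image.1 hb
    refine ⟨a, ha, ?_⟩
    rw [spAut_apply, sign_spAutFun, map_xor_eq_some] at hsb
    exact hsb

lemma IsMRSub.assembled_mem {A : Set (Cube n)} (hA : IsMRSub A) {x : Cube n}
    {T : Finset (Cube n)} (hT : ∀ a ∈ T, a ∈ A) (h : Assembled x T) : x ∈ A :=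
  hA.assemble_mem T hT x h.1 h.2

/-- Every element of `A` is assembled from the coatoms of `A` above it. -/
lemma IsMRSub.assembled_coAt {A : Set (Cube n)} (hA : IsMRSub A) {x : Cube n} (hx : x ∈ A) :
    Assembled x ((Set.toFinite {a | a ∈ coAt A ∧ x ≤ a}).toFinset) := by
  classical
  rw [assembled_iff_sign]
  intro i c
  constructor
  · intro hc
    have hi : i ∈ supp x := mem_supp_iff.2 (by rw [hc]; simp)
    obtain ⟨a, haA, hxa, hia⟩ := hA.exists_coAt_supp hx hi
    refine ⟨a, by simp [Set.Finite.mem_toFinset]; exact ⟨haA, hxa⟩, ?_⟩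
    rw [sign_eq_of_le hxa hia] at hc
    exact hc
  · rintro ⟨a, ha, hc⟩
    rw [Set.Finite.mem_toFinset] at ha
    exact le_iff_sign.1 ha.2 i c hc


/-! ### restriction to a subalgebra -/
section Restrict
variable {A : Set (Cube n)}

/-- the top element of the subposet `A` -/
def topA (hA : IsMRSub A) : ↥A := ⟨⊤, hA.1⟩

lemma le_topA (hA : IsMRSub A) (x : ↥A) : x ≤ topA hA := by
  show (x : Cube n) ≤ ⊤
  exact le_top

lemma map_topA (hA : IsMRSub A) (ψ : ↥A ≃o ↥A) : ψ (topA hA) = topA hA := by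
  have h1 : ψ (topA hA) ≤ topA hA := le_topA hA _
  have h2 : topA hA ≤ ψ (topA hA) := by
    have := ψ.monotone (le_topA hA (ψ.symm (topA hA)))
    simpa using this
  exact le_antisymm h1 h2

lemma coAt_map_sub (hA : IsMRSub A) (ψ : ↥A ≃o ↥A) {a : Cube n} (ha : a ∈ coAt A) :
    (↑(ψ ⟨a, ha.1⟩) : Cube n) ∈ coAt A := by
  refine ⟨(ψ ⟨a, ha.1⟩).2, ?_, ?_⟩
  · intro hc
    have : ψ ⟨a, ha.1⟩ = topA hA := Subtype.ext hc
    have h2 : (⟨a, ha.1⟩ : ↥A) = topA hA := by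
      have := congrArg ψ.symm this
      rw [ψ.symm_apply_apply, ← map_topA hA ψ] at this
      rw [this, ψ.symm_apply_apply]
    exact ha.2.1 (congrArg Subtype.val h2)
  · intro b hb hbt hba
    have hle : ψ ⟨a, ha.1⟩ ≤ ⟨b, hb⟩ := hba
    have h1 : (⟨a, ha.1⟩ : ↥A) ≤ ψ.symm ⟨b, hb⟩ := by
      have := ψ.symm.monotone hle
      simpa using this
    have h2 : (↑(ψ.symm ⟨b, hb⟩) : Cube n) ≠ ⊤ := by
      intro hc
      have : ψ.symm ⟨b, hb⟩ = topA hA := Subtype.ext hc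
      have := congrArg ψ this
      rw [ψ.apply_symm_apply, map_topA hA ψ] at this
      exact hbt (congrArg Subtype.val this)
    have h3 := ha.2.2 _ (ψ.symm ⟨b, hb⟩).2 h2 h1
    have h4 : ψ.symm ⟨b, hb⟩ = ⟨a, ha.1⟩ := Subtype.ext h3
    have := congrArg ψ h4
    rw [ψ.apply_symm_apply] at this
    rw [← this]

/-- the permutation of the coatoms of `A` induced by an order automorphism of `A` -/
noncomputable def permCoAt (hA : IsMRSub A) (ψ : ↥A ≃o ↥A) : Equiv.Perm ↥(coAt A) where
  toFun a := ⟨↑(ψ ⟨↑a, a.2.1⟩), coAt_map_sub hA ψ a.2⟩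
  invFun a := ⟨↑(ψ.symm ⟨↑a, a.2.1⟩), coAt_map_sub hA ψ.symm a.2⟩
  left_inv a := by
    apply Subtype.ext
    show (↑(ψ.symm ⟨↑(ψ ⟨↑a, a.2.1⟩), _⟩) : Cube n) = ↑a
    have : (⟨↑(ψ ⟨↑a, a.2.1⟩), (coAt_map_sub hA ψ a.2).1⟩ : ↥A) = ψ ⟨↑a, a.2.1⟩ := rfl
    rw [this, ψ.symm_apply_apply]
  right_inv a := by
    apply Subtype.ext
    show (↑(ψ ⟨↑(ψ.symm ⟨↑a, a.2.1⟩), _⟩) : Cube n) = ↑a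
    have : (⟨↑(ψ.symm ⟨↑a, a.2.1⟩), (coAt_map_sub hA ψ.symm a.2).1⟩ : ↥A) = ψ.symm ⟨↑a, a.2.1⟩ := rfl
    rw [this, ψ.apply_symm_apply]

lemma permCoAt_apply (hA : IsMRSub A) (ψ : ↥A ≃o ↥A) (a : ↥(coAt A)) :
    (↑(permCoAt hA ψ a) : Cube n) = ↑(ψ ⟨↑a, a.2.1⟩) := rfl

lemma permCoAt_symm_apply (hA : IsMRSub A) (ψ : ↥A ≃o ↥A) (a : ↥(coAt A)) :
    (↑((permCoAt hA ψ).symm a) : Cube n) = ↑(ψ.symm ⟨↑a, a.2.1⟩) := rfl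

/-- equality of automorphisms follows from agreement on coatoms -/
lemma permCoAt_injOn (hA : IsMRSub A) (ψ₁ ψ₂ : ↥A ≃o ↥A)
    (h : permCoAt hA ψ₁ = permCoAt hA ψ₂) : ψ₁ = ψ₂ := by
  have hsymm : ∀ a : ↥(coAt A), ψ₁.symm ⟨↑a, a.2.1⟩ = ψ₂.symm ⟨↑a, a.2.1⟩ := by
    intro a
    apply Subtype.ext
    rw [← permCoAt_symm_apply hA ψ₁ a, ← permCoAt_symm_apply hA ψ₂ a, h]
  apply OrderIso.ext
  funext x
  apply Subtype.ext
  apply hA.eq_of_coAt_le_iff (ψ₁ x).2 (ψ₂ x).2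
  intro a ha
  have key : ∀ ψ : ↥A ≃o ↥A, ((↑(ψ x) : Cube n) ≤ a ↔ x ≤ ψ.symm ⟨a, ha.1⟩) := by
    intro ψ
    constructor
    · intro hle
      have h1 : ψ x ≤ ⟨a, ha.1⟩ := hle
      have := ψ.symm.monotone h1
      simpa using this
    · intro hle
      have := ψ.monotone hle
      rw [ψ.apply_symm_apply] at this
      exact this
  rw [key ψ₁, key ψ₂, hsymm ⟨a, ha⟩]

end Restrict


/-! ### pairs of coatoms, representatives, realizing permutations -/
noncomputable section Pairs
variable {A : Set (Cube n)}

def antCA (hA : IsMRSub A) : Equiv.Perm ↥(coAt A) where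
  toFun a := ⟨anti ↑a, hA.anti_coAt a.2⟩
  invFun a := ⟨anti ↑a, hA.anti_coAt a.2⟩
  left_inv a := Subtype.ext (anti_anti _)
  right_inv a := Subtype.ext (anti_anti _)

lemma antCA_apply (hA : IsMRSub A) (a : ↥(coAt A)) :
    (↑(antCA hA a) : Cube n) = anti ↑a := rfl

lemma antCA_antCA (hA : IsMRSub A) (a : ↥(coAt A)) : antCA hA (antCA hA a) = a :=
  Subtype.ext (anti_anti _)

lemma antCA_ne (hA : IsMRSub A) (a : ↥(coAt A)) : antCA hA a ≠ a := by
  intro h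
  exact anti_ne_self a.2.2.1 (congrArg Subtype.val h)

def szA : ↥(coAt A) → ℕ := fun a => (supp (↑a : Cube n)).card

lemma szA_antCA (hA : IsMRSub A) (a : ↥(coAt A)) : szA (antCA hA a) = szA a := by
  unfold szA
  rw [antCA_apply, supp_anti]

def embC : Cube n → ℕ := fun x => (Fintype.equivFin (Cube n) x : ℕ)

lemma embC_injective : Function.Injective (embC (n := n)) := by
  intro x y h
  exact (Fintype.equivFin (Cube n)).injective (Fin.ext h)

def RS (hA : IsMRSub A) : Set ↥(coAt A) :=
  {a | embC (↑a : Cube n) < embC (anti (↑a : Cube n))}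

lemma RS_not_anti (hA : IsMRSub A) {a : ↥(coAt A)} (h : a ∈ RS hA) : antCA hA a ∉ RS hA := by
  intro h2
  rw [RS, Set.mem_setOf_eq] at h h2
  rw [antCA_apply, anti_anti] at h2
  omega

lemma RS_of_not_mem (hA : IsMRSub A) {a : ↥(coAt A)} (h : a ∉ RS hA) : antCA hA a ∈ RS hA := by
  rw [RS, Set.mem_setOf_eq] at h ⊢
  rw [antCA_apply, anti_anti]
  have hne : embC (anti (↑a : Cube n)) ≠ embC (↑a : Cube n) :=
    fun hc => anti_ne_self a.2.2.1 (embC_injective hc)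
  omega

lemma supp_disjoint_CA (hA : IsMRSub A) {a b : ↥(coAt A)} (h1 : b ≠ a) (h2 : b ≠ antCA hA a) :
    Disjoint (supp (↑a : Cube n)) (supp (↑b : Cube n)) := by
  apply hA.supp_disjoint a.2 b.2
  · exact fun hc => h1 (Subtype.ext hc)
  · exact fun hc => h2 (Subtype.ext hc)

lemma RS_uniq (hA : IsMRSub A) {r r' : ↥(coAt A)} (hr : r ∈ RS hA) (hr' : r' ∈ RS hA)
    {i : Fin n} (hi : i ∈ supp (↑r : Cube n)) (hi' : i ∈ supp (↑r' : Cube n)) : r = r' := by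
  by_contra hne
  have h1 : r' ≠ r := fun h => hne h.symm
  have h2 : r' ≠ antCA hA r := fun hc => RS_not_anti hA hr (hc ▸ hr')
  exact Finset.disjoint_left.1 (supp_disjoint_CA hA h1 h2) hi hi'

def betaB (hA : IsMRSub A) (π : Equiv.Perm ↥(coAt A)) (hsz : ∀ a, szA (π a) = szA a)
    (a : ↥(coAt A)) : ↥(supp (↑a : Cube n)) ≃ ↥(supp (↑(π a) : Cube n)) :=
  Finset.equivOfCardEq
    (show (supp (↑a : Cube n)).card = (supp (↑(π a) : Cube n)).card from (hsz a).symm)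

def Pprop (hA : IsMRSub A) (i : Fin n) : Prop :=
  ∃ a : ↥(coAt A), a ∈ RS hA ∧ i ∈ supp (↑a : Cube n)

lemma Pprop_of_mem (hA : IsMRSub A) {i : Fin n} (a : ↥(coAt A))
    (hi : i ∈ supp (↑a : Cube n)) : Pprop hA i := by
  by_cases h : a ∈ RS hA
  · exact ⟨a, h, hi⟩
  · exact ⟨antCA hA a, RS_of_not_mem hA h, by rw [antCA_apply, supp_anti]; exact hi⟩

open Classical in
def Fmap (hA : IsMRSub A) (π : Equiv.Perm ↥(coAt A)) (hsz : ∀ a, szA (π a) = szA a)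
    (i : Fin n) : Fin n :=
  if h : Pprop hA i then ↑(betaB hA π hsz h.choose ⟨i, h.choose_spec.2⟩) else i

lemma betaB_congr (hA : IsMRSub A) (π : Equiv.Perm ↥(coAt A)) (hsz : ∀ a, szA (π a) = szA a)
    {a a' : ↥(coAt A)} (h : a = a') {i : Fin n} (hi : i ∈ supp (↑a : Cube n))
    (hi' : i ∈ supp (↑a' : Cube n)) :
    (↑(betaB hA π hsz a ⟨i, hi⟩) : Fin n) = ↑(betaB hA π hsz a' ⟨i, hi'⟩) := by
  subst h; rfl

lemma Fmap_spec (hA : IsMRSub A) (π : Equiv.Perm ↥(coAt A)) (hsz : ∀ a, szA (π a) = szA a)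
    {r : ↥(coAt A)} (hr : r ∈ RS hA) {i : Fin n} (hi : i ∈ supp (↑r : Cube n)) :
    Fmap hA π hsz i = ↑(betaB hA π hsz r ⟨i, hi⟩) := by
  have h : Pprop hA i := ⟨r, hr, hi⟩
  rw [Fmap, dif_pos h]
  exact betaB_congr hA π hsz (RS_uniq hA h.choose_spec.1 hr h.choose_spec.2 hi) _ _

lemma Fmap_mem (hA : IsMRSub A) (π : Equiv.Perm ↥(coAt A)) (hsz : ∀ a, szA (π a) = szA a)
    {r : ↥(coAt A)} (hr : r ∈ RS hA) {i : Fin n} (hi : i ∈ supp (↑r : Cube n)) :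
    Fmap hA π hsz i ∈ supp (↑(π r) : Cube n) := by
  rw [Fmap_spec hA π hsz hr hi]
  exact (betaB hA π hsz r ⟨i, hi⟩).2

lemma Fmap_id (hA : IsMRSub A) (π : Equiv.Perm ↥(coAt A)) (hsz : ∀ a, szA (π a) = szA a)
    {i : Fin n} (h : ¬ Pprop hA i) : Fmap hA π hsz i = i := dif_neg h

lemma pi_pair_disjoint (hA : IsMRSub A) (π : Equiv.Perm ↥(coAt A))
    (hcomm : ∀ a, π (antCA hA a) = antCA hA (π a))
    {r r' : ↥(coAt A)} (hr : r ∈ RS hA) (hr' : r' ∈ RS hA) (hne : r ≠ r') :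
    Disjoint (supp (↑(π r) : Cube n)) (supp (↑(π r') : Cube n)) := by
  apply supp_disjoint_CA hA
  · exact fun h => hne (π.injective h).symm
  · intro hc
    have h2 : r' = antCA hA r := by
      apply π.injective
      rw [hc, hcomm r]
    exact RS_not_anti hA hr (h2 ▸ hr')

lemma Fmap_inj (hA : IsMRSub A) (π : Equiv.Perm ↥(coAt A)) (hsz : ∀ a, szA (π a) = szA a)
    (hcomm : ∀ a, π (antCA hA a) = antCA hA (π a)) :
    Function.Injective (Fmap hA π hsz) := by
  intro i j h
  by_cases hi : Pprop hA i <;> by_cases hj : Pprop hA j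
  · obtain ⟨r, hr, hir⟩ := hi
    obtain ⟨r', hr', hjr⟩ := hj
    rw [Fmap_spec hA π hsz hr hir, Fmap_spec hA π hsz hr' hjr] at h
    by_cases hrr : r = r'
    · subst hrr
      have := (betaB hA π hsz r).injective (Subtype.ext h)
      exact congrArg Subtype.val this
    · exfalso
      have h1 : (↑(betaB hA π hsz r ⟨i, hir⟩) : Fin n) ∈ supp (↑(π r) : Cube n) :=
        (betaB hA π hsz r ⟨i, hir⟩).2
      have h2 : (↑(betaB hA π hsz r' ⟨j, hjr⟩) : Fin n) ∈ supp (↑(π r') : Cube n) :=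
        (betaB hA π hsz r' ⟨j, hjr⟩).2
      rw [← h] at h2
      exact Finset.disjoint_left.1 (pi_pair_disjoint hA π hcomm hr hr' hrr) h1 h2
  · exfalso
    obtain ⟨r, hr, hir⟩ := hi
    rw [Fmap_spec hA π hsz hr hir, Fmap_id hA π hsz hj] at h
    apply hj
    rw [← h]
    exact Pprop_of_mem hA (π r) (betaB hA π hsz r ⟨i, hir⟩).2
  · exfalso
    obtain ⟨r, hr, hjr⟩ := hj
    rw [Fmap_spec hA π hsz hr hjr, Fmap_id hA π hsz hi] at h
    apply hi
    rw [h]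
    exact Pprop_of_mem hA (π r) (betaB hA π hsz r ⟨j, hjr⟩).2
  · rw [Fmap_id hA π hsz hi, Fmap_id hA π hsz hj] at h
    exact h

def sigmaF (hA : IsMRSub A) (π : Equiv.Perm ↥(coAt A)) (hsz : ∀ a, szA (π a) = szA a)
    (hcomm : ∀ a, π (antCA hA a) = antCA hA (π a)) : Equiv.Perm (Fin n) :=
  Equiv.ofBijective (Fmap hA π hsz)
    (Finite.injective_iff_bijective.1 (Fmap_inj hA π hsz hcomm))

lemma sigmaF_apply (hA : IsMRSub A) (π : Equiv.Perm ↥(coAt A)) (hsz : ∀ a, szA (π a) = szA a)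
    (hcomm : ∀ a, π (antCA hA a) = antCA hA (π a)) (i : Fin n) :
    sigmaF hA π hsz hcomm i = Fmap hA π hsz i := rfl

open Classical in
def epsF (hA : IsMRSub A) (π : Equiv.Perm ↥(coAt A)) (hsz : ∀ a, szA (π a) = szA a)
    (i : Fin n) : Bool :=
  if h : Pprop hA i then
    xor (((↑(h.choose) : Cube n).sign i).getD true)
        (((↑(π h.choose) : Cube n).sign (Fmap hA π hsz i)).getD true)
  else false

end Pairs


section Realize2
variable {A : Set (Cube n)} (hA : IsMRSub A) (π : Equiv.Perm ↥(coAt A))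
  (hsz : ∀ a, szA (π a) = szA a) (hcomm : ∀ a, π (antCA hA a) = antCA hA (π a))

lemma epsF_spec {r : ↥(coAt A)} (hr : r ∈ RS hA) {i : Fin n} (hi : i ∈ supp (↑r : Cube n)) :
    epsF hA π hsz i =
      xor (((↑r : Cube n).sign i).getD true)
          (((↑(π r) : Cube n).sign (Fmap hA π hsz i)).getD true) := by
  have h : Pprop hA i := ⟨r, hr, hi⟩
  rw [epsF, dif_pos h]
  have hch : h.choose = r := RS_uniq hA h.choose_spec.1 hr h.choose_spec.2 hi
  rw [hch]

lemma spAut_realizes {r : ↥(coAt A)} (hr : r ∈ RS hA) :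
    spAut (sigmaF hA π hsz hcomm) (epsF hA π hsz) ↑r = ↑(π r) := by
  set σ := sigmaF hA π hsz hcomm with hσdef
  set ε := epsF hA π hsz with hεdef
  apply ext_sign
  intro j
  have hj : σ (σ.symm j) = j := σ.apply_symm_apply j
  set i := σ.symm j with hidef
  rw [← hj, spAut_apply, sign_spAutFun']
  have hFi : σ i = Fmap hA π hsz i := rfl
  by_cases hir : i ∈ supp (↑r : Cube n)
  · obtain ⟨s, hs⟩ := mem_supp_iff'.1 hir
    have hmem : Fmap hA π hsz i ∈ supp (↑(π r) : Cube n) := Fmap_mem hA π hsz hr hir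
    obtain ⟨s', hs'⟩ := mem_supp_iff'.1 hmem
    have heps : ε i = xor s s' := by
      rw [hεdef, epsF_spec hA π hsz hr hir, hs, hs']
      rfl
    rw [hs, heps, hFi, hs']
    cases s <;> cases s' <;> rfl
  · have h0 : (↑r : Cube n).sign i = none := by
      by_contra hc
      exact hir (mem_supp_iff.2 hc)
    rw [h0]
    have h1 : (↑(π r) : Cube n).sign (σ i) = none := by
      rw [sign_eq_none_iff]
      have hnot : σ i ∉ supp (↑(π r) : Cube n) := by
        by_cases hP : Pprop hA i
        · obtain ⟨r', hr', hir'⟩ := hP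
          have hmem : σ i ∈ supp (↑(π r') : Cube n) := by
            rw [hFi]; exact Fmap_mem hA π hsz hr' hir'
          have hne : r ≠ r' := fun he => hir (he ▸ hir')
          exact fun hc =>
            Finset.disjoint_left.1 (pi_pair_disjoint hA π hcomm hr hr' hne) hc hmem
        · intro hc
          rw [hFi, Fmap_id hA π hsz hP] at hc
          exact hP (Pprop_of_mem hA (π r) hc)
      rw [mem_supp_iff, not_not, sign_eq_none_iff] at hnot
      exact hnot
    rw [h1]
    rfl

lemma IsAut.anti_comm {φ : Cube n ≃o Cube n} (hφ : IsAut φ) (x : Cube n) :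
    φ (anti x) = anti (φ x) := by
  rw [anti_eq_delta_top, anti_eq_delta_top, hφ ⊤ x le_top, OrderIso.map_top]

lemma spAut_realizes_all (a : ↥(coAt A)) :
    spAut (sigmaF hA π hsz hcomm) (epsF hA π hsz) ↑a = ↑(π a) := by
  by_cases h : a ∈ RS hA
  · exact spAut_realizes hA π hsz hcomm h
  · have hr : antCA hA a ∈ RS hA := RS_of_not_mem hA h
    have h1 : (↑a : Cube n) = anti ↑(antCA hA a) := by rw [antCA_apply, anti_anti]
    calc spAut (sigmaF hA π hsz hcomm) (epsF hA π hsz) ↑a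
        = spAut (sigmaF hA π hsz hcomm) (epsF hA π hsz) (anti ↑(antCA hA a)) := by rw [← h1]
      _ = anti (spAut (sigmaF hA π hsz hcomm) (epsF hA π hsz) ↑(antCA hA a)) :=
          (isAut_spAut _ _).anti_comm _
      _ = anti ↑(π (antCA hA a)) := by rw [spAut_realizes hA π hsz hcomm hr]
      _ = ↑(antCA hA (π (antCA hA a))) := (antCA_apply hA _).symm
      _ = ↑(π a) := by rw [← hcomm, antCA_antCA]

end Realize2

section NS
variable {A : Set (Cube n)}

lemma spAut_maps_A (hA : IsMRSub A) (σ' : Equiv.Perm (Fin n)) (ε' : Fin n → Bool)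
    (hco : ∀ a : ↥(coAt A), spAut σ' ε' ↑a ∈ coAt A) :
    ∀ x ∈ A, spAut σ' ε' x ∈ A := by
  intro x hx
  have hasm := hA.assembled_coAt hx
  have h2 := assembled_spAut σ' ε' hasm
  apply hA.assembled_mem _ h2
  intro b hb
  obtain ⟨a, ha, rfl⟩ := Finset.mem_image.1 hb
  rw [Set.Finite.mem_toFinset] at ha
  exact (hco ⟨a, ha.1⟩).1

lemma spAut_image_A (hA : IsMRSub A) (π : Equiv.Perm ↥(coAt A))
    (hsz : ∀ a, szA (π a) = szA a) (hcomm : ∀ a, π (antCA hA a) = antCA hA (π a)) :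
    spAut (sigmaF hA π hsz hcomm) (epsF hA π hsz) '' A = A := by
  have hfwd : ∀ x ∈ A, spAut (sigmaF hA π hsz hcomm) (epsF hA π hsz) x ∈ A :=
    spAut_maps_A hA _ _ (fun a => by
      rw [spAut_realizes_all hA π hsz hcomm a]; exact (π a).2)
  have hco' : ∀ a : ↥(coAt A),
      spAut (sigmaF hA π hsz hcomm)⁻¹ (epsF hA π hsz ∘ ⇑(sigmaF hA π hsz hcomm)⁻¹) ↑a
        ∈ coAt A := by
    intro a
    have h1 : spAut (sigmaF hA π hsz hcomm) (epsF hA π hsz) ↑(π.symm a) = ↑(π (π.symm a)) :=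
      spAut_realizes_all hA π hsz hcomm (π.symm a)
    rw [π.apply_symm_apply] at h1
    have h2 : (spAut (sigmaF hA π hsz hcomm) (epsF hA π hsz)).symm ↑a = ↑(π.symm a) := by
      rw [← h1, (spAut _ _).symm_apply_apply]
    have h3 : spAut (sigmaF hA π hsz hcomm)⁻¹
        (epsF hA π hsz ∘ ⇑(sigmaF hA π hsz hcomm)⁻¹) (↑a : Cube n)
        = (spAut (sigmaF hA π hsz hcomm) (epsF hA π hsz)).symm ↑a := rfl
    rw [h3, h2]
    exact (π.symm a).2
  have hbwd : ∀ x ∈ A, (spAut (sigmaF hA π hsz hcomm) (epsF hA π hsz)).symm x ∈ A := by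
    intro x hx
    have h3 : (spAut (sigmaF hA π hsz hcomm) (epsF hA π hsz)).symm x
        = spAut (sigmaF hA π hsz hcomm)⁻¹
            (epsF hA π hsz ∘ ⇑(sigmaF hA π hsz hcomm)⁻¹) x := rfl
    rw [h3]
    exact spAut_maps_A hA _ _ hco' x hx
  apply Set.eq_of_subset_of_subset
  · rintro y ⟨x, hx, rfl⟩
    exact hfwd x hx
  · intro x hx
    exact ⟨(spAut _ _).symm x, hbwd x hx, by simp⟩

def restrictIso (φ : Cube n ≃o Cube n) (h : φ '' A = A) : ↥A ≃o ↥A where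
  toFun x := ⟨φ ↑x, by
    have hm : φ ↑x ∈ φ '' A := ⟨↑x, x.2, rfl⟩
    rwa [h] at hm⟩
  invFun x := ⟨φ.symm ↑x, by
    have hx : (↑x : Cube n) ∈ φ '' A := by rw [h]; exact x.2
    obtain ⟨y, hy, hyx⟩ := hx
    have hs : φ.symm ↑x = y := by rw [← hyx]; exact φ.symm_apply_apply y
    rw [hs]; exact hy⟩
  left_inv x := Subtype.ext (by simp)
  right_inv x := Subtype.ext (by simp)
  map_rel_iff' := by
    intro x y
    show φ ↑x ≤ φ ↑y ↔ _
    rw [φ.le_iff_le]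
    rfl

lemma restrictIso_apply (φ : Cube n ≃o Cube n) (h : φ '' A = A) (x : ↥A) :
    (↑(restrictIso φ h x) : Cube n) = φ ↑x := rfl

def NSet (A : Set (Cube n)) : Set (↥A ≃o ↥A) :=
  {ψ : ↥A ≃o ↥A | IsSubAut ψ ∧
    ∃ φ ∈ AutSet n, φ '' A = A ∧ ∀ x : ↥A, (ψ x : Cube n) = φ ↑x}

lemma restrict_mem_NSet (φ : Cube n ≃o Cube n) (hAut : IsAut φ) (h : φ '' A = A) :
    restrictIso φ h ∈ NSet A := by
  constructor
  · intro x y hle hmem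
    show (↑(restrictIso φ h ⟨delta ↑x ↑y, hmem⟩) : Cube n) = _
    rw [restrictIso_apply, hAut ↑x ↑y hle, restrictIso_apply, restrictIso_apply]
  · exact ⟨φ, hAut, h, fun x => rfl⟩

lemma perm_surj (hA : IsMRSub A) (π : Equiv.Perm ↥(coAt A))
    (hsz : ∀ a, szA (π a) = szA a) (hcomm : ∀ a, π (antCA hA a) = antCA hA (π a)) :
    ∃ ψ ∈ NSet A, permCoAt hA ψ = π := by
  have himg := spAut_image_A hA π hsz hcomm
  refine ⟨restrictIso (spAut (sigmaF hA π hsz hcomm) (epsF hA π hsz)) himg,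
    restrict_mem_NSet _ (isAut_spAut _ _) himg, ?_⟩
  apply Equiv.ext
  intro a
  apply Subtype.ext
  rw [permCoAt_apply, restrictIso_apply]
  exact spAut_realizes_all hA π hsz hcomm a

lemma permCoAt_comm (hA : IsMRSub A) {ψ : ↥A ≃o ↥A} (hψ : ψ ∈ NSet A) (a : ↥(coAt A)) :
    permCoAt hA ψ (antCA hA a) = antCA hA (permCoAt hA ψ a) := by
  obtain ⟨_, φ, hφAut, himg, hres⟩ := hψ
  have hφ : IsAut φ := hφAut
  apply Subtype.ext
  have h1 : (↑(antCA hA a) : Cube n) = anti ↑a := antCA_apply hA a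
  have h2 : (⟨↑(antCA hA a), (antCA hA a).2.1⟩ : ↥A) = ⟨anti ↑a, hA.anti_mem a.2.1⟩ :=
    Subtype.ext h1
  have h3 : ψ ⟨↑(antCA hA a), (antCA hA a).2.1⟩ = ψ ⟨anti ↑a, hA.anti_mem a.2.1⟩ :=
    congrArg (fun z => ψ z) h2
  calc (↑(permCoAt hA ψ (antCA hA a)) : Cube n)
      = ↑(ψ ⟨↑(antCA hA a), (antCA hA a).2.1⟩) := permCoAt_apply hA ψ _
    _ = ↑(ψ ⟨anti ↑a, hA.anti_mem a.2.1⟩) := congrArg Subtype.val h3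
    _ = φ (anti ↑a) := hres _
    _ = anti (φ ↑a) := hφ.anti_comm ↑a
    _ = anti ↑(ψ ⟨↑a, a.2.1⟩) := by rw [hres]
    _ = anti ↑(permCoAt hA ψ a) := by rw [permCoAt_apply]
    _ = ↑(antCA hA (permCoAt hA ψ a)) := (antCA_apply hA _).symm

lemma permCoAt_sz (hA : IsMRSub A) {ψ : ↥A ≃o ↥A} (hψ : ψ ∈ NSet A) (a : ↥(coAt A)) :
    szA (permCoAt hA ψ a) = szA a := by
  obtain ⟨_, φ, hφAut, himg, hres⟩ := hψ
  unfold szA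
  rw [← card_coatomsAbove, ← card_coatomsAbove]
  have h1 : (↑(permCoAt hA ψ a) : Cube n) = φ ↑a := by
    rw [permCoAt_apply, hres]
  rw [h1, ncard_coatomsAbove_map]

end NS


section CountG
variable {A : Set (Cube n)}

def GSet (hA : IsMRSub A) : Type _ :=
  {π : Equiv.Perm ↥(coAt A) //
    (∀ a, π (antCA hA a) = antCA hA (π a)) ∧ ∀ a, szA (π a) = szA a}

noncomputable def NEquivG (hA : IsMRSub A) : ↥(NSet A) ≃ GSet hA :=
  Equiv.ofBijective
    (fun ψ => ⟨permCoAt hA ψ.1, fun a => permCoAt_comm hA ψ.2 a,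
      fun a => permCoAt_sz hA ψ.2 a⟩)
    (by
      constructor
      · intro ψ₁ ψ₂ h
        apply Subtype.ext
        exact permCoAt_injOn hA _ _ (congrArg Subtype.val h)
      · rintro ⟨π, hcomm, hsz⟩
        obtain ⟨ψ, hψ, hperm⟩ := perm_surj hA π hsz hcomm
        exact ⟨⟨ψ, hψ⟩, Subtype.ext hperm⟩)

lemma ncard_NSet (hA : IsMRSub A) : (NSet A).ncard = Nat.card (GSet hA) := by
  rw [← Nat.card_coe_set_eq]
  exact Nat.card_congr (NEquivG hA)

open Classical in
noncomputable def repCA (hA : IsMRSub A) (a : ↥(coAt A)) : ↥(coAt A) :=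
  if a ∈ RS hA then a else antCA hA a

lemma repCA_mem (hA : IsMRSub A) (a : ↥(coAt A)) : repCA hA a ∈ RS hA := by
  rw [repCA]
  split_ifs with h
  · exact h
  · exact RS_of_not_mem hA h

lemma repCA_of_mem (hA : IsMRSub A) {a : ↥(coAt A)} (h : a ∈ RS hA) : repCA hA a = a := by
  rw [repCA, if_pos h]

lemma repCA_of_not_mem (hA : IsMRSub A) {a : ↥(coAt A)} (h : a ∉ RS hA) :
    repCA hA a = antCA hA a := by
  rw [repCA, if_neg h]

lemma repCA_anti (hA : IsMRSub A) (a : ↥(coAt A)) : repCA hA (antCA hA a) = repCA hA a := by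
  by_cases h : a ∈ RS hA
  · rw [repCA_of_mem hA h, repCA_of_not_mem hA (RS_not_anti hA h), antCA_antCA]
  · rw [repCA_of_mem hA (RS_of_not_mem hA h), repCA_of_not_mem hA h]

lemma szA_repCA (hA : IsMRSub A) (a : ↥(coAt A)) : szA (repCA hA a) = szA a := by
  by_cases h : a ∈ RS hA
  · rw [repCA_of_mem hA h]
  · rw [repCA_of_not_mem hA h, szA_antCA]

end CountG


section CountG2
variable {A : Set (Cube n)}

lemma rep_eq_cases (hA : IsMRSub A) {a b : ↥(coAt A)} (h : repCA hA a = repCA hA b) :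
    a = b ∨ a = antCA hA b := by
  by_cases ha : a ∈ RS hA <;> by_cases hb : b ∈ RS hA
  · rw [repCA_of_mem hA ha, repCA_of_mem hA hb] at h; exact Or.inl h
  · rw [repCA_of_mem hA ha, repCA_of_not_mem hA hb] at h; exact Or.inr h
  · rw [repCA_of_not_mem hA ha, repCA_of_mem hA hb] at h
    refine Or.inr ?_
    rw [← h, antCA_antCA]
  · rw [repCA_of_not_mem hA ha, repCA_of_not_mem hA hb] at h
    left
    have := congrArg (antCA hA) h
    rwa [antCA_antCA, antCA_antCA] at this

lemma recover_from_rep (hA : IsMRSub A) {x y : ↥(coAt A)} (h : repCA hA x = repCA hA y)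
    (hiff : x ∈ RS hA ↔ y ∈ RS hA) : x = y := by
  by_cases hx : x ∈ RS hA
  · have hy := hiff.1 hx
    rwa [repCA_of_mem hA hx, repCA_of_mem hA hy] at h
  · have hy := fun hc => hx (hiff.2 hc)
    rw [repCA_of_not_mem hA hx, repCA_of_not_mem hA hy] at h
    have := congrArg (antCA hA) h
    rwa [antCA_antCA, antCA_antCA] at this

noncomputable def frepPerm (hA : IsMRSub A) (π : GSet hA) : Equiv.Perm ↥(RS hA) :=
  Equiv.ofBijective (fun r => ⟨repCA hA (π.1 ↑r), repCA_mem hA _⟩)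
    (Finite.injective_iff_bijective.1 (by
      intro r r' h
      have h1 : repCA hA (π.1 ↑r) = repCA hA (π.1 ↑r') := congrArg Subtype.val h
      rcases rep_eq_cases hA h1 with he | he
      · exact Subtype.ext (π.1.injective he)
      · exfalso
        rw [← π.2.1] at he
        have h2 : (↑r : ↥(coAt A)) = antCA hA ↑r' := π.1.injective he
        have h3 : (↑r' : ↥(coAt A)) ∈ RS hA := r'.2
        have h4 := RS_not_anti hA h3
        rw [← h2] at h4
        exact h4 r.2))

lemma frepPerm_apply (hA : IsMRSub A) (π : GSet hA) (r : ↥(RS hA)) :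
    (↑(frepPerm hA π r) : ↥(coAt A)) = repCA hA (π.1 ↑r) := rfl

def PresPerm (hA : IsMRSub A) : Type _ :=
  {f : Equiv.Perm ↥(RS hA) // ∀ r, szA (↑(f r) : ↥(coAt A)) = szA (↑r : ↥(coAt A))}

open Classical in
noncomputable def PhiG (hA : IsMRSub A) (π : GSet hA) :
    PresPerm hA × (↥(RS hA) → Bool) :=
  ⟨⟨frepPerm hA π, fun r => by
      rw [frepPerm_apply, szA_repCA, π.2.2]⟩,
    fun r => decide ((π.1 ↑r) ∈ RS hA)⟩

lemma PhiG_injective (hA : IsMRSub A) : Function.Injective (PhiG hA) := by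
  intro π π' h
  have hf : ∀ r : ↥(RS hA), repCA hA (π.1 ↑r) = repCA hA (π'.1 ↑r) := by
    intro r
    have := congrArg (fun p => ((p.1 : PresPerm hA).1 r : ↥(coAt A))) h
    simpa [PhiG, frepPerm_apply] using this
  have hb : ∀ r : ↥(RS hA), (π.1 ↑r ∈ RS hA) ↔ (π'.1 ↑r ∈ RS hA) := by
    intro r
    classical
    have h2 : decide ((π.1 ↑r) ∈ RS hA) = decide ((π'.1 ↑r) ∈ RS hA) :=
      congrArg (fun p => p.2 r) h
    exact decide_eq_decide.1 h2
  apply Subtype.ext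
  apply Equiv.ext
  intro a
  by_cases ha : a ∈ RS hA
  · exact recover_from_rep hA (hf ⟨a, ha⟩) (hb ⟨a, ha⟩)
  · have hr : antCA hA a ∈ RS hA := RS_of_not_mem hA ha
    have h1 : a = antCA hA (antCA hA a) := (antCA_antCA hA a).symm
    rw [h1, π.2.1, π'.2.1]
    congr 1
    exact recover_from_rep hA (hf ⟨antCA hA a, hr⟩) (hb ⟨antCA hA a, hr⟩)

section Surj
variable (hA : IsMRSub A) (f : Equiv.Perm ↥(RS hA))
  (hf : ∀ r, szA (↑(f r) : ↥(coAt A)) = szA (↑r : ↥(coAt A))) (b : ↥(RS hA) → Bool)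

open Classical in
noncomputable def ggFun (r : ↥(RS hA)) : ↥(coAt A) :=
  if b r then ↑(f r) else antCA hA ↑(f r)

lemma repCA_ggFun (r : ↥(RS hA)) : repCA hA (ggFun hA f b r) = ↑(f r) := by
  rw [ggFun]
  split_ifs with h
  · exact repCA_of_mem hA (f r).2
  · rw [repCA_anti]
    exact repCA_of_mem hA (f r).2

lemma ggFun_mem_iff (r : ↥(RS hA)) : ggFun hA f b r ∈ RS hA ↔ b r = true := by
  rw [ggFun]
  split_ifs with h
  · simp [h, (f r).2]
  · simp only [h]
    constructor
    · intro hc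
      exact absurd hc (RS_not_anti hA (f r).2)
    · intro hc; simp at hc

lemma szA_ggFun (hf : ∀ r, szA (↑(f r) : ↥(coAt A)) = szA (↑r : ↥(coAt A)))
    (r : ↥(RS hA)) : szA (ggFun hA f b r) = szA (↑r : ↥(coAt A)) := by
  rw [ggFun]
  split_ifs with h
  · exact hf r
  · rw [szA_antCA]; exact hf r

open Classical in
noncomputable def gFun (a : ↥(coAt A)) : ↥(coAt A) :=
  if h : a ∈ RS hA then ggFun hA f b ⟨a, h⟩
  else antCA hA (ggFun hA f b ⟨antCA hA a, RS_of_not_mem hA h⟩)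

lemma gFun_mem (r : ↥(RS hA)) : gFun hA f b ↑r = ggFun hA f b r := by
  rw [gFun, dif_pos r.2]

lemma gFun_not_mem {a : ↥(coAt A)} (h : a ∉ RS hA) :
    gFun hA f b a = antCA hA (ggFun hA f b ⟨antCA hA a, RS_of_not_mem hA h⟩) := by
  rw [gFun, dif_neg h]

lemma gFun_injective : Function.Injective (gFun hA f b) := by
  have key : ∀ a a' : ↥(coAt A), a ∈ RS hA → a' ∉ RS hA →
      gFun hA f b a = gFun hA f b a' → False := by
    intro a a' ha ha' h
    rw [gFun, dif_pos ha, gFun, dif_neg ha'] at h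
    have h1 : repCA hA (ggFun hA f b ⟨a, ha⟩)
        = repCA hA (antCA hA (ggFun hA f b ⟨antCA hA a', RS_of_not_mem hA ha'⟩)) := by
      rw [h]
    rw [repCA_ggFun, repCA_anti, repCA_ggFun] at h1
    have h3 := f.injective (Subtype.ext h1)
    have h4 : a = antCA hA a' := congrArg Subtype.val h3
    have h5 : (⟨a, ha⟩ : ↥(RS hA)) = ⟨antCA hA a', RS_of_not_mem hA ha'⟩ := Subtype.ext h4
    rw [h5] at h
    exact antCA_ne hA _ h.symm
  intro a a' h
  by_cases ha : a ∈ RS hA <;> by_cases ha' : a' ∈ RS hA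
  · rw [gFun, dif_pos ha, gFun, dif_pos ha'] at h
    have h1 : repCA hA (ggFun hA f b ⟨a, ha⟩) = repCA hA (ggFun hA f b ⟨a', ha'⟩) := by
      rw [h]
    rw [repCA_ggFun, repCA_ggFun] at h1
    have h2 := f.injective (Subtype.ext h1)
    have h3 : (⟨a, ha⟩ : ↥(RS hA)) = ⟨a', ha'⟩ := h2
    exact congrArg Subtype.val h3
  · exact absurd h (by intro hc; exact key a a' ha ha' hc)
  · exact absurd h.symm (by intro hc; exact key a' a ha' ha hc)
  · rw [gFun, dif_neg ha, gFun, dif_neg ha'] at h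
    have h0 := (antCA hA).injective h
    have h1 : repCA hA (ggFun hA f b ⟨antCA hA a, RS_of_not_mem hA ha⟩)
        = repCA hA (ggFun hA f b ⟨antCA hA a', RS_of_not_mem hA ha'⟩) := by rw [h0]
    rw [repCA_ggFun, repCA_ggFun] at h1
    have h2 := f.injective (Subtype.ext h1)
    have h3 : antCA hA a = antCA hA a' := congrArg Subtype.val h2
    have := congrArg (antCA hA) h3
    rwa [antCA_antCA, antCA_antCA] at this

end Surj
end CountG2


section CountG3
variable {A : Set (Cube n)}

noncomputable def piOf (hA : IsMRSub A) (f : Equiv.Perm ↥(RS hA)) (b : ↥(RS hA) → Bool) :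
    Equiv.Perm ↥(coAt A) :=
  Equiv.ofBijective (gFun hA f b)
    (Finite.injective_iff_bijective.1 (gFun_injective hA f b))

lemma piOf_apply (hA : IsMRSub A) (f : Equiv.Perm ↥(RS hA)) (b : ↥(RS hA) → Bool)
    (a : ↥(coAt A)) : piOf hA f b a = gFun hA f b a := rfl

lemma piOf_comm (hA : IsMRSub A) (f : Equiv.Perm ↥(RS hA)) (b : ↥(RS hA) → Bool)
    (a : ↥(coAt A)) : piOf hA f b (antCA hA a) = antCA hA (piOf hA f b a) := by
  rw [piOf_apply, piOf_apply]
  by_cases ha : a ∈ RS hA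
  · have hna : antCA hA a ∉ RS hA := RS_not_anti hA ha
    rw [gFun_not_mem hA f b hna, gFun, dif_pos ha]
    have h2 : (⟨antCA hA (antCA hA a), RS_of_not_mem hA hna⟩ : ↥(RS hA)) = ⟨a, ha⟩ :=
      Subtype.ext (antCA_antCA hA a)
    rw [h2]
  · have hna : antCA hA a ∈ RS hA := RS_of_not_mem hA ha
    rw [gFun_not_mem hA f b ha]
    rw [antCA_antCA]
    have h1 : gFun hA f b (antCA hA a) = ggFun hA f b ⟨antCA hA a, hna⟩ := by
      rw [gFun, dif_pos hna]
    rw [h1]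

lemma piOf_sz (hA : IsMRSub A) (f : Equiv.Perm ↥(RS hA))
    (hf : ∀ r, szA (↑(f r) : ↥(coAt A)) = szA (↑r : ↥(coAt A))) (b : ↥(RS hA) → Bool)
    (a : ↥(coAt A)) : szA (piOf hA f b a) = szA a := by
  rw [piOf_apply]
  by_cases ha : a ∈ RS hA
  · rw [gFun, dif_pos ha]
    exact szA_ggFun hA f b hf _
  · rw [gFun_not_mem hA f b ha, szA_antCA]
    rw [szA_ggFun hA f b hf]
    show szA (↑(⟨antCA hA a, RS_of_not_mem hA ha⟩ : ↥(RS hA)) : ↥(coAt A)) = szA a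
    rw [szA_antCA]

lemma PhiG_surjective (hA : IsMRSub A) : Function.Surjective (PhiG hA) := by
  rintro ⟨⟨f, hf⟩, b⟩
  refine ⟨⟨piOf hA f b, piOf_comm hA f b, piOf_sz hA f hf b⟩, ?_⟩
  have hgg : ∀ r : ↥(RS hA), (piOf hA f b) ↑r = ggFun hA f b r := by
    intro r
    rw [piOf_apply, gFun, dif_pos r.2]
  apply Prod.ext
  · apply Subtype.ext
    apply Equiv.ext
    intro r
    apply Subtype.ext
    show repCA hA ((piOf hA f b) ↑r) = ↑(f r)
    rw [hgg r, repCA_ggFun]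
  · funext r
    classical
    show decide ((piOf hA f b) ↑r ∈ RS hA) = b r
    rw [hgg r]
    cases hb : b r
    · have := (ggFun_mem_iff hA f b r)
      simp only [hb] at this
      simp only [decide_eq_false_iff_not]
      intro hc
      exact absurd (this.1 hc) (by simp)
    · have := (ggFun_mem_iff hA f b r).2 hb
      simp [this]

noncomputable def GEquivProd (hA : IsMRSub A) :
    GSet hA ≃ PresPerm hA × (↥(RS hA) → Bool) :=
  Equiv.ofBijective (PhiG hA) ⟨PhiG_injective hA, PhiG_surjective hA⟩

end CountG3


section FiberPerm
variable {α : Type*} {β : Type*}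

def permOfFibers (s : α → β) (F : ∀ b, Equiv.Perm {a : α // s a = b}) : Equiv.Perm α :=
  (Equiv.sigmaFiberEquiv s).permCongr (Equiv.sigmaCongrRight F)

lemma permOfFibers_apply (s : α → β) (F : ∀ b, Equiv.Perm {a : α // s a = b}) (a : α) :
    permOfFibers s F a = ↑(F (s a) ⟨a, rfl⟩) := rfl

lemma s_permOfFibers (s : α → β) (F : ∀ b, Equiv.Perm {a : α // s a = b}) (a : α) :
    s (permOfFibers s F a) = s a := by
  rw [permOfFibers_apply]
  exact (F (s a) ⟨a, rfl⟩).2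

noncomputable def permFiberEquiv [Finite α] (s : α → β) :
    (∀ b, Equiv.Perm {a : α // s a = b}) ≃ {f : Equiv.Perm α // ∀ a, s (f a) = s a} := by
  apply Equiv.ofBijective (fun F => ⟨permOfFibers s F, fun a => s_permOfFibers s F a⟩)
  constructor
  · intro F F' h
    have h1 : ∀ a : α, permOfFibers s F a = permOfFibers s F' a := by
      intro a
      have := congrArg Subtype.val h
      exact congrFun (congrArg (fun e => (⇑(e : Equiv.Perm α))) this) a
    funext b
    apply Equiv.ext
    intro x
    obtain ⟨a, ha⟩ := x
    subst ha
    apply Subtype.ext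
    have h2 := h1 a
    rw [permOfFibers_apply, permOfFibers_apply] at h2
    exact h2
  · rintro ⟨f, hf⟩
    refine ⟨fun b =>
      { toFun := fun x => ⟨f ↑x, by rw [hf]; exact x.2⟩
        invFun := fun x => ⟨f.symm ↑x, by
          have h := hf (f.symm ↑x)
          rw [f.apply_symm_apply] at h
          rw [← h]; exact x.2⟩
        left_inv := fun x => Subtype.ext (f.symm_apply_apply _)
        right_inv := fun x => Subtype.ext (f.apply_symm_apply _) }, ?_⟩
    apply Subtype.ext
    apply Equiv.ext
    intro a
    rfl

end FiberPerm


section FinalCount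
variable {A : Set (Cube n)}

lemma szA_mem_Icc (a : ↥(coAt A)) : szA a ∈ Finset.Icc 1 n := by
  rw [Finset.mem_Icc]
  constructor
  · have h1 : supp (↑a : Cube n) ≠ ∅ := fun hc => a.2.2.1 (eq_top_iff_supp.2 hc)
    exact Finset.card_pos.2 (Finset.nonempty_iff_ne_empty.2 h1)
  · calc (supp (↑a : Cube n)).card ≤ (Finset.univ : Finset (Fin n)).card :=
        Finset.card_le_univ _
      _ = n := by simp

def sIcc (hA : IsMRSub A) : ↥(RS hA) → ↥(Finset.Icc 1 n) :=
  fun r => ⟨szA (↑r : ↥(coAt A)), szA_mem_Icc _⟩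

lemma typeSet_eq_image (i : ℕ) :
    typeSet A i = Subtype.val '' {a : ↥(coAt A) | szA a = i} := by
  ext x
  simp only [typeSet, Set.mem_setOf_eq, Set.mem_image]
  constructor
  · rintro ⟨h1, h2⟩
    refine ⟨⟨x, h1⟩, ?_, rfl⟩
    show szA (⟨x, h1⟩ : ↥(coAt A)) = i
    unfold szA
    rw [← card_coatomsAbove]
    exact h2
  · rintro ⟨a, ha, rfl⟩
    refine ⟨a.2, ?_⟩
    rw [card_coatomsAbove]
    exact ha

lemma ncard_typeSet (i : ℕ) :
    (typeSet A i).ncard = Nat.card {a : ↥(coAt A) // szA a = i} := by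
  rw [typeSet_eq_image, Set.ncard_image_of_injective _ Subtype.val_injective,
    ← Nat.card_coe_set_eq]
  exact Nat.card_congr (Equiv.subtypeEquivRight (fun a => Iff.rfl))

noncomputable def pairFiberEquiv (hA : IsMRSub A) (i : ℕ) :
    ({r : ↥(RS hA) // szA (↑r : ↥(coAt A)) = i} × Bool) ≃ {a : ↥(coAt A) // szA a = i} := by
  apply Equiv.ofBijective (fun p => match p with
    | (r, true) => ⟨↑↑r, r.2⟩
    | (r, false) => ⟨antCA hA ↑↑r, by rw [szA_antCA]; exact r.2⟩)
  constructor
  · rintro ⟨r, c⟩ ⟨r', c'⟩ h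
    cases c <;> cases c' <;> simp only [] at h
    · have h1 : antCA hA ↑↑r = antCA hA ↑↑r' := congrArg Subtype.val h
      have h2 := (antCA hA).injective h1
      have h3 : (↑r : ↥(RS hA)) = ↑r' := Subtype.ext h2
      rw [Subtype.ext h3]
    · exfalso
      have h1 : antCA hA ↑↑r = ↑↑r' := congrArg Subtype.val h
      have h2 := (↑r' : ↥(RS hA)).2
      rw [← h1] at h2
      exact RS_not_anti hA (↑r : ↥(RS hA)).2 h2
    · exfalso
      have h1 : (↑↑r : ↥(coAt A)) = antCA hA ↑↑r' := congrArg Subtype.val h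
      have h2 := (↑r : ↥(RS hA)).2
      rw [h1] at h2
      exact RS_not_anti hA (↑r' : ↥(RS hA)).2 h2
    · have h1 := congrArg Subtype.val h
      have h3 : (↑r : ↥(RS hA)) = ↑r' := Subtype.ext h1
      rw [Subtype.ext h3]
  · rintro ⟨a, ha⟩
    by_cases h : a ∈ RS hA
    · exact ⟨(⟨⟨a, h⟩, ha⟩, true), rfl⟩
    · refine ⟨(⟨⟨antCA hA a, RS_of_not_mem hA h⟩, by rw [szA_antCA]; exact ha⟩, false), ?_⟩
      apply Subtype.ext
      show antCA hA (antCA hA a) = a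
      exact antCA_antCA hA a

lemma t_eq (hA : IsMRSub A) (t : ℕ → ℕ) (ht : ∀ i, 2 * t i = (typeSet A i).ncard) (i : ℕ) :
    t i = Nat.card {r : ↥(RS hA) // szA (↑r : ↥(coAt A)) = i} := by
  have h := ht i
  rw [ncard_typeSet, ← Nat.card_congr (pairFiberEquiv hA i), Nat.card_prod] at h
  simp only [Nat.card_eq_fintype_card, Fintype.card_bool] at h
  omega

lemma nat_card_perm {X : Type*} [Finite X] : Nat.card (Equiv.Perm X) = (Nat.card X).factorial := by
  letI := Fintype.ofFinite X
  letI : DecidableEq X := Classical.decEq X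
  rw [Nat.card_eq_fintype_card, Nat.card_eq_fintype_card, Fintype.card_perm]

noncomputable def fiber_equiv_fiber (hA : IsMRSub A) (b : ↥(Finset.Icc 1 n)) :
    {r : ↥(RS hA) // sIcc hA r = b} ≃ {r : ↥(RS hA) // szA (↑r : ↥(coAt A)) = ↑b} :=
  Equiv.subtypeEquivRight (fun r => by rw [sIcc, Subtype.ext_iff])

lemma card_RS (hA : IsMRSub A) :
    Nat.card ↥(RS hA)
      = ∑ i ∈ Finset.Icc 1 n, Nat.card {r : ↥(RS hA) // szA (↑r : ↥(coAt A)) = i} := by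
  classical
  rw [Nat.card_congr (Equiv.sigmaFiberEquiv (sIcc hA)).symm]
  letI : Fintype ↥(RS hA) := Fintype.ofFinite _
  have h1 : Nat.card (Σ b : ↥(Finset.Icc 1 n), {r : ↥(RS hA) // sIcc hA r = b})
      = ∑ b : ↥(Finset.Icc 1 n), Nat.card {r : ↥(RS hA) // sIcc hA r = b} := by
    rw [Nat.card_eq_fintype_card, Fintype.card_sigma]
    congr 1
    funext b
    rw [Nat.card_eq_fintype_card]
  rw [h1]
  have h2 : ∀ b : ↥(Finset.Icc 1 n), Nat.card {r : ↥(RS hA) // sIcc hA r = b}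
      = Nat.card {r : ↥(RS hA) // szA (↑r : ↥(coAt A)) = ↑b} :=
    fun b => Nat.card_congr (fiber_equiv_fiber hA b)
  rw [Finset.sum_congr rfl (fun b _ => h2 b)]
  exact Finset.sum_coe_sort (Finset.Icc 1 n)
    (fun i => Nat.card {r : ↥(RS hA) // szA (↑r : ↥(coAt A)) = i})

lemma card_PresPerm (hA : IsMRSub A) :
    Nat.card (PresPerm hA)
      = ∏ i ∈ Finset.Icc 1 n,
          (Nat.card {r : ↥(RS hA) // szA (↑r : ↥(coAt A)) = i}).factorial := by
  classical
  have e1 : PresPerm hA ≃ {f : Equiv.Perm ↥(RS hA) // ∀ r, sIcc hA (f r) = sIcc hA r} :=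
    Equiv.subtypeEquivRight (fun f => by
      constructor
      · intro h r; exact Subtype.ext (h r)
      · intro h r; exact congrArg Subtype.val (h r))
  rw [Nat.card_congr e1, Nat.card_congr (permFiberEquiv (sIcc hA)).symm, Nat.card_pi]
  have h2 : ∀ b : ↥(Finset.Icc 1 n),
      Nat.card (Equiv.Perm {r : ↥(RS hA) // sIcc hA r = b})
        = (Nat.card {r : ↥(RS hA) // szA (↑r : ↥(coAt A)) = ↑b}).factorial := by
    intro b
    rw [nat_card_perm, Nat.card_congr (fiber_equiv_fiber hA b)]
  rw [Finset.prod_congr rfl (fun b _ => h2 b)]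
  exact Finset.prod_coe_sort (Finset.Icc 1 n)
    (fun i => (Nat.card {r : ↥(RS hA) // szA (↑r : ↥(coAt A)) = i}).factorial)

end FinalCount

end Cube

/-- The image of the restriction homomorphism `ρ : Stab(A) → Aut(A)` has
cardinality `2^k ∏ᵢ tᵢ!`. -/
theorem image_restriction_card (n : ℕ) (hn : 1 ≤ n) (A : Set (Cube n))
    (hA : Cube.IsMRSub A)
    (t : ℕ → ℕ) (ht : ∀ i, 2 * t i = (Cube.typeSet A i).ncard)
    (k : ℕ) (hk : k = ∑ i ∈ Finset.Icc 1 n, t i) :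
    ({ψ : A ≃o A | Cube.IsSubAut ψ ∧
        ∃ φ ∈ Cube.AutSet n, φ '' A = A ∧ ∀ x : A, (ψ x : Cube n) = φ ↑x}).ncard =
      2 ^ k * ∏ i ∈ Finset.Icc 1 n, Nat.factorial (t i) := by
  classical
  show (Cube.NSet A).ncard = _
  rw [Cube.ncard_NSet hA, Nat.card_congr (Cube.GEquivProd hA), Nat.card_prod]
  have hk2 : Nat.card ↥(Cube.RS hA) = k := by
    rw [Cube.card_RS hA, hk]
    exact Finset.sum_congr rfl (fun i _ => (Cube.t_eq hA t ht i).symm)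
  have h1 : Nat.card (↥(Cube.RS hA) → Bool) = 2 ^ k := by
    rw [Nat.card_fun, hk2]
    norm_num
  have h2 : Nat.card (Cube.PresPerm hA) = ∏ i ∈ Finset.Icc 1 n, (t i).factorial := by
    rw [Cube.card_PresPerm hA]
    exact Finset.prod_congr rfl (fun i _ => by rw [← Cube.t_eq hA t ht i])
  rw [h1, h2, mul_comm]
end

section
/- Let P be a partition of the set of coatoms of 𝓛ₙ such that each block X ∈ P is closed under the sign-flip c ↦ Δ(𝟙,c) (hence each |X| is even). Let Aut_P = {φ ∈ Aut(𝓛ₙ) : φ[X] = X for all X ∈ P}. Then Aut_P is isomorphic, as a group, to the product ∏_{X ∈ P} Aut(𝓛_{|X|/2}). -/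
namespace Cube

lemma isAut_one (n : ℕ) : IsAut (1 : Cube n ≃o Cube n) := fun _ _ _ => rfl

lemma isAut_mul {n : ℕ} {f g : Cube n ≃o Cube n} (hf : IsAut f) (hg : IsAut g) :
    IsAut (f * g) := by
  intro x y h
  have : (f * g) (delta x y) = f (g (delta x y)) := rfl
  rw [this, hg x y h, hf (g x) (g y) (g.monotone h)]
  rfl

lemma isAut_inv {n : ℕ} {f : Cube n ≃o Cube n} (hf : IsAut f) : IsAut f⁻¹ := by
  have hsymm : (f⁻¹ : Cube n ≃o Cube n) = f.symm := rfl
  rw [hsymm]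
  intro x y h
  apply f.injective
  have h' : f.symm y ≤ f.symm x := f.symm.monotone h
  have := hf (f.symm x) (f.symm y) h'
  calc f (f.symm (delta x y)) = delta x y := f.apply_symm_apply _
    _ = delta (f (f.symm x)) (f (f.symm y)) := by
        rw [f.apply_symm_apply, f.apply_symm_apply]
    _ = f (delta (f.symm x) (f.symm y)) := this.symm

/-- The automorphism group of `𝓛ₙ`, as a subgroup of the order automorphisms. -/
def autGroup (n : ℕ) : Subgroup (Cube n ≃o Cube n) where
  carrier := AutSet n
  one_mem' := isAut_one n
  mul_mem' := isAut_mul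
  inv_mem' := isAut_inv

/-- The subgroup of automorphisms of `𝓛ₙ` fixing (setwise) every block of a
family `P` of sets of faces. -/
def autGroupP (n : ℕ) (P : Set (Set (Cube n))) : Subgroup (Cube n ≃o Cube n) where
  carrier := {φ | IsAut φ ∧ ∀ X ∈ P, φ '' X = X}
  one_mem' := ⟨isAut_one n, fun X _ => by simp⟩
  mul_mem' := by
    rintro f g ⟨hf, hf'⟩ ⟨hg, hg'⟩
    refine ⟨isAut_mul hf hg, fun X hX => ?_⟩
    have : (⇑(f * g) : Cube n → Cube n) = f ∘ g := rfl
    rw [this, Set.image_comp, hg' X hX, hf' X hX]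
  inv_mem' := by
    rintro f ⟨hf, hf'⟩
    refine ⟨isAut_inv hf, fun X hX => ?_⟩
    have h1 : (⇑(f⁻¹ : Cube n ≃o Cube n) : Cube n → Cube n) = ⇑f.symm := rfl
    rw [h1]
    conv_lhs => rw [← hf' X hX]
    rw [Set.image_image]
    simp

end Cube


namespace Cube
variable {n : ℕ}

lemma le_def {x y : Cube n} : x ≤ y ↔ y.pos ⊆ x.pos ∧ y.neg ⊆ x.neg := Iff.rfl

@[simp] lemma top_pos : (⊤ : Cube n).pos = ∅ := rfl
@[simp] lemma top_neg : (⊤ : Cube n).neg = ∅ := rfl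

def flipP {n : ℕ} : Equiv.Perm (Fin n × Bool) where
  toFun p := (p.1, !p.2)
  invFun p := (p.1, !p.2)
  left_inv p := by simp
  right_inv p := by simp

@[simp] lemma flipP_apply (p : Fin n × Bool) : flipP p = (p.1, !p.2) := rfl

@[simp] lemma flipP_flipP (p : Fin n × Bool) : flipP (flipP p) = p := by simp

def T (p : Fin n × Bool) : Cube n :=
  if p.2 then ⟨{p.1}, ∅, by simp⟩ else ⟨∅, {p.1}, by simp⟩

@[simp] lemma T_true (i : Fin n) : T (i, true) = ⟨{i}, ∅, by simp⟩ := rfl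
@[simp] lemma T_false (i : Fin n) : T (i, false) = ⟨∅, {i}, by simp⟩ := rfl

lemma T_injective : Function.Injective (T (n := n)) := by
  rintro ⟨i, b⟩ ⟨j, c⟩ h
  cases b <;> cases c <;> simp only [T_true, T_false, Cube.mk.injEq] at h
  · rw [Finset.singleton_inj.mp h.2]
  · exact absurd h.2 (by simp)
  · exact absurd h.1 (by simp)
  · rw [Finset.singleton_inj.mp h.1]

lemma T_flipP (p : Fin n × Bool) : T (flipP p) = delta ⊤ (T p) := by
  obtain ⟨i, b⟩ := p
  cases b <;> (apply Cube.ext <;> simp [delta, T])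

def fs (x : Cube n) : Finset (Fin n × Bool) :=
  x.pos.image (fun i => (i, true)) ∪ x.neg.image (fun i => (i, false))

@[simp] lemma mem_fs_true {x : Cube n} {i : Fin n} : (i, true) ∈ fs x ↔ i ∈ x.pos := by
  simp [fs]

@[simp] lemma mem_fs_false {x : Cube n} {i : Fin n} : (i, false) ∈ fs x ↔ i ∈ x.neg := by
  simp [fs]

lemma fs_injective : Function.Injective (fs (n := n)) := by
  intro x y h
  ext i
  · rw [← mem_fs_true, ← mem_fs_true, h]
  · rw [← mem_fs_false, ← mem_fs_false, h]

lemma le_iff_fs_subset {x y : Cube n} : x ≤ y ↔ fs y ⊆ fs x := by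
  constructor
  · intro h
    rintro ⟨i, b⟩ hp
    cases b
    · rw [mem_fs_false] at hp ⊢; exact h.2 hp
    · rw [mem_fs_true] at hp ⊢; exact h.1 hp
  · intro h
    constructor
    · intro i hi; have := h (mem_fs_true.mpr hi); rwa [mem_fs_true] at this
    · intro i hi; have := h (mem_fs_false.mpr hi); rwa [mem_fs_false] at this

lemma le_T_iff {x : Cube n} {p : Fin n × Bool} : x ≤ T p ↔ p ∈ fs x := by
  obtain ⟨i, b⟩ := p
  cases b <;> simp [le_def, T, Finset.singleton_subset_iff]

lemma fs_T (p : Fin n × Bool) : fs (T p) = {p} := by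
  ext ⟨i, b⟩
  obtain ⟨j, c⟩ := p
  cases b <;> cases c <;> simp [T]

def FlipFree (S : Finset (Fin n × Bool)) : Prop := ∀ p ∈ S, flipP p ∉ S

lemma fs_flipFree (x : Cube n) : FlipFree (fs x) := by
  rintro ⟨i, b⟩ hp hfp
  cases b <;> simp only [flipP_apply, Bool.not_true, Bool.not_false,
    mem_fs_true, mem_fs_false] at hp hfp
  · exact (Finset.disjoint_left.mp x.disj) hfp hp
  · exact (Finset.disjoint_left.mp x.disj) hp hfp

def gs (S : Finset (Fin n × Bool)) (h : FlipFree S) : Cube n :=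
  ⟨(S.filter fun p => p.2 = true).image Prod.fst,
   (S.filter fun p => p.2 = false).image Prod.fst, by
    rw [Finset.disjoint_left]
    rintro i hi hj
    simp only [Finset.mem_image, Finset.mem_filter] at hi hj
    obtain ⟨⟨a, b⟩, ⟨ha, hb⟩, rfl⟩ := hi
    obtain ⟨⟨a', b'⟩, ⟨ha', hb'⟩, he⟩ := hj
    simp only at hb hb' he
    subst hb hb' he
    exact h _ ha (by simpa using ha')⟩

lemma fs_gs (S : Finset (Fin n × Bool)) (h : FlipFree S) : fs (gs S h) = S := by
  ext ⟨i, b⟩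
  cases b <;>
    simp only [gs, mem_fs_true, mem_fs_false, Finset.mem_image, Finset.mem_filter] <;>
    constructor
  · rintro ⟨⟨a, c⟩, ⟨ha, hc⟩, rfl⟩; simp only at hc; subst hc; exact ha
  · intro hS; exact ⟨(i, false), ⟨hS, rfl⟩, rfl⟩
  · rintro ⟨⟨a, c⟩, ⟨ha, hc⟩, rfl⟩; simp only at hc; subst hc; exact ha
  · intro hS; exact ⟨(i, true), ⟨hS, rfl⟩, rfl⟩

lemma mem_image_flipP {S : Finset (Fin n × Bool)} {p : Fin n × Bool} :
    p ∈ S.image flipP ↔ flipP p ∈ S := by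
  constructor
  · rintro hp
    rw [Finset.mem_image] at hp
    obtain ⟨q, hq, rfl⟩ := hp
    simpa using hq
  · intro h
    rw [Finset.mem_image]
    exact ⟨flipP p, h, by simp⟩

lemma fs_delta (x y : Cube n) :
    fs (delta x y) = fs x ∪ ((fs y).image flipP \ ((fs x).image flipP)) := by
  ext ⟨i, b⟩
  cases b <;>
    simp [delta, mem_image_flipP, Finset.mem_union, Finset.mem_sdiff]

end Cube
namespace Cube
variable {n : ℕ}

/-- The subgroup of permutations commuting with a fixed permutation `J`. -/
def centSubgroup {β : Type*} (J : Equiv.Perm β) : Subgroup (Equiv.Perm β) where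
  carrier := {e | ∀ b, e (J b) = J (e b)}
  one_mem' := fun _ => rfl
  mul_mem' := by
    intro e f he hf b
    simp only [Equiv.Perm.mul_apply]
    rw [hf, he]
  inv_mem' := by
    intro e he b
    apply e.injective
    have hinv : ∀ x, e (e⁻¹ x) = x := fun x => e.apply_symm_apply x
    rw [hinv, he, hinv]

lemma mem_centSubgroup {β : Type*} {J e : Equiv.Perm β} :
    e ∈ centSubgroup J ↔ ∀ b, e (J b) = J (e b) := Iff.rfl

lemma image_flipFree {e : Equiv.Perm (Fin n × Bool)} (he : e ∈ centSubgroup flipP)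
    {S : Finset (Fin n × Bool)} (hS : FlipFree S) : FlipFree (S.image e) := by
  intro p hp hfp
  rw [Finset.mem_image] at hp hfp
  obtain ⟨q, hq, rfl⟩ := hp
  obtain ⟨r, hr, hre⟩ := hfp
  rw [← he q] at hre
  exact hS q hq (e.injective hre ▸ hr)

def PhiFun (e : Equiv.Perm (Fin n × Bool)) (he : e ∈ centSubgroup flipP) (x : Cube n) :
    Cube n :=
  gs ((fs x).image e) (image_flipFree he (fs_flipFree x))

lemma fs_PhiFun (e : Equiv.Perm (Fin n × Bool)) (he : e ∈ centSubgroup flipP) (x : Cube n) :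
    fs (PhiFun e he x) = (fs x).image e := fs_gs _ _

lemma PhiFun_PhiFun {e f : Equiv.Perm (Fin n × Bool)} (he : e ∈ centSubgroup flipP)
    (hf : f ∈ centSubgroup flipP) (x : Cube n) :
    PhiFun e he (PhiFun f hf x) = PhiFun (e * f) (mul_mem he hf) x := by
  apply fs_injective
  rw [fs_PhiFun, fs_PhiFun, fs_PhiFun, Finset.image_image]
  rfl

def Phi (e : Equiv.Perm (Fin n × Bool)) (he : e ∈ centSubgroup flipP) :
    Cube n ≃o Cube n where
  toFun := PhiFun e he
  invFun := PhiFun e⁻¹ (inv_mem he)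
  left_inv x := by
    apply fs_injective
    rw [fs_PhiFun, fs_PhiFun, Finset.image_image]
    ext p
    simp
  right_inv x := by
    apply fs_injective
    rw [fs_PhiFun, fs_PhiFun, Finset.image_image]
    ext p
    simp
  map_rel_iff' := by
    intro x y
    simp only [Equiv.coe_fn_mk]
    rw [le_iff_fs_subset, le_iff_fs_subset, fs_PhiFun, fs_PhiFun,
      Finset.image_subset_image_iff e.injective]

lemma Phi_apply (e : Equiv.Perm (Fin n × Bool)) (he : e ∈ centSubgroup flipP) (x : Cube n) :
    Phi e he x = PhiFun e he x := rfl

lemma fs_Phi (e : Equiv.Perm (Fin n × Bool)) (he : e ∈ centSubgroup flipP) (x : Cube n) :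
    fs (Phi e he x) = (fs x).image e := fs_PhiFun e he x

lemma image_image_flipP {e : Equiv.Perm (Fin n × Bool)} (he : e ∈ centSubgroup flipP)
    (S : Finset (Fin n × Bool)) :
    (S.image flipP).image e = (S.image e).image flipP := by
  rw [Finset.image_image, Finset.image_image]
  apply Finset.image_congr
  intro p _
  exact he p

lemma isAut_Phi (e : Equiv.Perm (Fin n × Bool)) (he : e ∈ centSubgroup flipP) :
    IsAut (Phi e he) := by
  intro x y _
  apply fs_injective
  rw [fs_Phi, fs_delta, fs_delta, Finset.image_union,
    Finset.image_sdiff _ _ e.injective, fs_Phi, fs_Phi,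
    image_image_flipP he, image_image_flipP he]

lemma Phi_T (e : Equiv.Perm (Fin n × Bool)) (he : e ∈ centSubgroup flipP)
    (p : Fin n × Bool) : Phi e he (T p) = T (e p) := by
  apply fs_injective
  rw [fs_Phi, fs_T, fs_T, Finset.image_singleton]

lemma Phi_mul {e f : Equiv.Perm (Fin n × Bool)} (he : e ∈ centSubgroup flipP)
    (hf : f ∈ centSubgroup flipP) :
    Phi (e * f) (mul_mem he hf) = Phi e he * Phi f hf := by
  apply (RelIso.ext ·)
  intro x
  have : (Phi e he * Phi f hf) x = Phi e he (Phi f hf x) := rfl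
  rw [this, Phi_apply, Phi_apply, Phi_apply, PhiFun_PhiFun]

lemma Phi_one : Phi (1 : Equiv.Perm (Fin n × Bool)) (one_mem _) = 1 := by
  apply (RelIso.ext ·)
  intro x
  apply fs_injective
  rw [Phi_apply, fs_PhiFun]
  simp

end Cube
namespace Cube
variable {n : ℕ}

lemma corank_T (p : Fin n × Bool) : corank (T p) = 1 := by
  obtain ⟨i, b⟩ := p
  cases b <;> simp [corank, T]

lemma corank_eq_one_iff_s5 {x : Cube n} : corank x = 1 ↔ ∃ p, T p = x := by
  constructor
  · intro h
    obtain ⟨i, hi⟩ := Finset.card_eq_one.mp h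
    have hmem : i ∈ x.pos ∪ x.neg := by rw [hi]; exact Finset.mem_singleton_self i
    have hsubpos : x.pos ⊆ {i} := hi ▸ Finset.subset_union_left
    have hsubneg : x.neg ⊆ {i} := hi ▸ Finset.subset_union_right
    rcases Finset.mem_union.mp hmem with hp | hn
    · refine ⟨(i, true), ?_⟩
      apply Cube.ext
      · simp only [T_true]
        exact (Finset.eq_singleton_iff_unique_mem.mpr
          ⟨hp, fun j hj => Finset.mem_singleton.mp (hsubpos hj)⟩).symm
      · simp only [T_true]
        symm
        rw [Finset.eq_empty_iff_forall_notMem]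
        intro j hj
        have := Finset.mem_singleton.mp (hsubneg hj)
        subst this
        exact Finset.disjoint_left.mp x.disj hp hj
    · refine ⟨(i, false), ?_⟩
      apply Cube.ext
      · simp only [T_false]
        symm
        rw [Finset.eq_empty_iff_forall_notMem]
        intro j hj
        have := Finset.mem_singleton.mp (hsubpos hj)
        subst this
        exact Finset.disjoint_left.mp x.disj hj hn
      · simp only [T_false]
        exact (Finset.eq_singleton_iff_unique_mem.mpr
          ⟨hn, fun j hj => Finset.mem_singleton.mp (hsubneg hj)⟩).symm
  · rintro ⟨p, rfl⟩
    exact corank_T p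

lemma T_ne_top (p : Fin n × Bool) : T p ≠ ⊤ := by
  intro h
  obtain ⟨i, b⟩ := p
  cases b
  · exact absurd (congrArg Cube.neg h) (by simp [T])
  · exact absurd (congrArg Cube.pos h) (by simp [T])

lemma isCoatom_T (p : Fin n × Bool) : IsCoatom (T p) := by
  refine ⟨T_ne_top p, fun y hy => ?_⟩
  obtain ⟨i, b⟩ := p
  cases b
  · have h1 : y.pos ⊆ ∅ := hy.le.1
    have h2 : y.neg ⊆ {i} := hy.le.2
    rcases Finset.subset_singleton_iff.mp h2 with h | h
    · apply Cube.ext <;> simp [Finset.subset_empty.mp h1, h]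
    · exfalso
      apply hy.ne
      apply Cube.ext <;> simp [T, Finset.subset_empty.mp h1, h]
  · have h1 : y.pos ⊆ {i} := hy.le.1
    have h2 : y.neg ⊆ ∅ := hy.le.2
    rcases Finset.subset_singleton_iff.mp h1 with h | h
    · apply Cube.ext <;> simp [Finset.subset_empty.mp h2, h]
    · exfalso
      apply hy.ne
      apply Cube.ext <;> simp [T, Finset.subset_empty.mp h2, h]

lemma isCoatom_iff {x : Cube n} : IsCoatom x ↔ ∃ p, T p = x := by
  constructor
  · intro h
    by_contra hno
    push_neg at hno
    have hx : x ≠ ⊤ := h.1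
    have hne : (x.pos ∪ x.neg).Nonempty := by
      rw [Finset.nonempty_iff_ne_empty]
      intro hemp
      apply hx
      apply Cube.ext <;>
        [exact Finset.subset_empty.mp (hemp ▸ Finset.subset_union_left);
         exact Finset.subset_empty.mp (hemp ▸ Finset.subset_union_right)]
    obtain ⟨i, hi⟩ := hne
    rcases Finset.mem_union.mp hi with hp | hn
    · have hle : x ≤ T (i, true) := le_def.mpr ⟨by simp [T, hp], by simp [T]⟩
      have hne2 : x ≠ T (i, true) := fun hc => hno (i, true) hc.symm
      exact T_ne_top _ (h.2 _ (lt_of_le_of_ne hle hne2))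
    · have hle : x ≤ T (i, false) := le_def.mpr ⟨by simp [T], by simp [T, hn]⟩
      have hne2 : x ≠ T (i, false) := fun hc => hno (i, false) hc.symm
      exact T_ne_top _ (h.2 _ (lt_of_le_of_ne hle hne2))
  · rintro ⟨p, rfl⟩
    exact isCoatom_T p

lemma exists_T_eq (φ : Cube n ≃o Cube n) (p : Fin n × Bool) : ∃ q, T q = φ (T p) := by
  rw [← isCoatom_iff]
  rw [OrderIso.isCoatom_iff]
  exact isCoatom_T p

noncomputable def eFun (φ : Cube n ≃o Cube n) (p : Fin n × Bool) : Fin n × Bool :=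
  (exists_T_eq φ p).choose

lemma T_eFun (φ : Cube n ≃o Cube n) (p : Fin n × Bool) : T (eFun φ p) = φ (T p) :=
  (exists_T_eq φ p).choose_spec

noncomputable def ePerm (φ : Cube n ≃o Cube n) : Equiv.Perm (Fin n × Bool) where
  toFun := eFun φ
  invFun := eFun φ.symm
  left_inv p := by
    apply T_injective
    rw [T_eFun, T_eFun, OrderIso.symm_apply_apply]
  right_inv p := by
    apply T_injective
    rw [T_eFun, T_eFun, OrderIso.apply_symm_apply]

lemma T_ePerm (φ : Cube n ≃o Cube n) (p : Fin n × Bool) : T (ePerm φ p) = φ (T p) :=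
  T_eFun φ p

lemma ePerm_mem_cent {φ : Cube n ≃o Cube n} (hφ : IsAut φ) :
    ePerm φ ∈ centSubgroup flipP := by
  intro p
  apply T_injective
  rw [T_ePerm, T_flipP, T_flipP, T_ePerm, hφ ⊤ (T p) le_top, map_top]

lemma Phi_ePerm {φ : Cube n ≃o Cube n} (hφ : IsAut φ) :
    Phi (ePerm φ) (ePerm_mem_cent hφ) = φ := by
  apply (RelIso.ext ·)
  intro x
  apply fs_injective
  rw [fs_Phi]
  ext p
  rw [Finset.mem_image]
  constructor
  · rintro ⟨q, hq, rfl⟩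
    rw [← le_T_iff, T_ePerm]
    exact φ.monotone (le_T_iff.mpr hq)
  · intro hp
    refine ⟨(ePerm φ).symm p, ?_, Equiv.apply_symm_apply _ _⟩
    rw [← le_T_iff] at hp ⊢
    have : T p = φ (T ((ePerm φ).symm p)) := by
      rw [← T_ePerm, Equiv.apply_symm_apply]
    rw [this] at hp
    exact φ.le_iff_le.mp hp

end Cube
namespace Cube

/-- Conjugating the centralizer subgroup along an equivariant bijection. -/
def centCongr {β γ : Type*} (Jb : Equiv.Perm β) (Jc : Equiv.Perm γ) (E : β ≃ γ)
    (hE : ∀ b, E (Jb b) = Jc (E b)) : centSubgroup Jb ≃* centSubgroup Jc where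
  toFun e := ⟨E.permCongr e.1, by
    intro c
    have hE' : ∀ c, E.symm (Jc c) = Jb (E.symm c) := by
      intro c
      apply E.injective
      rw [Equiv.apply_symm_apply, hE, Equiv.apply_symm_apply]
    simp only [Equiv.permCongr_apply]
    rw [hE', e.2 (E.symm c), hE]⟩
  invFun e := ⟨E.symm.permCongr e.1, by
    intro b
    simp only [Equiv.permCongr_apply, Equiv.symm_symm]
    rw [hE, e.2 (E b)]
    apply E.injective
    rw [Equiv.apply_symm_apply, hE, Equiv.apply_symm_apply]⟩
  left_inv e := by
    apply Subtype.ext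
    apply Equiv.ext
    intro b
    simp
  right_inv e := by
    apply Subtype.ext
    apply Equiv.ext
    intro c
    simp
  map_mul' e f := by
    apply Subtype.ext
    apply Equiv.ext
    intro c
    simp

/-- Every finite type with a fixed-point-free involution is equivariantly
equivalent to `Fin m × Bool` with the sign flip. -/
lemma exists_equivariant {β : Type} [Finite β] (j : Equiv.Perm β)
    (hj2 : ∀ b, j (j b) = b) (hjf : ∀ b, j b ≠ b) :
    ∃ m : ℕ, Nat.card β = 2 * m ∧
      ∃ E : β ≃ Fin m × Bool, ∀ b, E (j b) = flipP (E b) := by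
  classical
  let s : Setoid β := ⟨fun b c => c = b ∨ c = j b, by
    constructor
    · intro b; exact Or.inl rfl
    · intro b c h
      rcases h with rfl | rfl
      · exact Or.inl rfl
      · exact Or.inr (hj2 b).symm
    · intro a b c hab hbc
      rcases hab with rfl | rfl
      · exact hbc
      · rcases hbc with rfl | rfl
        · exact Or.inr rfl
        · exact Or.inl (hj2 a)⟩
  let Q := Quotient s
  have hout : ∀ b : β, b = (⟦b⟧ : Q).out ∨ b = j (⟦b⟧ : Q).out := fun b =>
    Quotient.exact (Quotient.out_eq (⟦b⟧ : Q))
  have hmkj : ∀ b : β, (⟦j b⟧ : Q) = ⟦b⟧ := fun b => Quotient.sound (Or.inr (hj2 b).symm)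
  let F : β → Q × Bool := fun b => ((⟦b⟧ : Q), decide (b = (⟦b⟧ : Q).out))
  let G : Q × Bool → β := fun z => if z.2 = true then z.1.out else j z.1.out
  have hGF : ∀ b, G (F b) = b := by
    intro b
    have hred : G (F b) =
        if decide (b = (⟦b⟧ : Q).out) = true then (⟦b⟧ : Q).out else j ((⟦b⟧ : Q).out) := rfl
    rw [hred]
    by_cases hb : b = (⟦b⟧ : Q).out
    · rw [decide_eq_true hb, if_pos rfl]
      exact hb.symm
    · rw [decide_eq_false hb, if_neg (by simp)]
      rcases hout b with h | h
      · exact absurd h hb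
      · exact h.symm
  have hFG : ∀ z, F (G z) = z := by
    rintro ⟨q, tb⟩
    cases tb
    · have hred : F (G (q, false)) =
          ((⟦j q.out⟧ : Q), decide (j q.out = (⟦j q.out⟧ : Q).out)) := rfl
      rw [hred]
      have h1 : (⟦j q.out⟧ : Q) = q := by rw [hmkj, Quotient.out_eq]
      rw [h1]
      rw [decide_eq_false (hjf q.out)]
    · have hred : F (G (q, true)) =
          ((⟦q.out⟧ : Q), decide (q.out = (⟦q.out⟧ : Q).out)) := rfl
      rw [hred, Quotient.out_eq]
      rw [decide_eq_true rfl]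
  let E0 : β ≃ Q × Bool := ⟨F, G, hGF, hFG⟩
  have hE0 : ∀ b, E0 (j b) = ((E0 b).1, !(E0 b).2) := by
    intro b
    have hred1 : E0 (j b) = ((⟦j b⟧ : Q), decide (j b = (⟦j b⟧ : Q).out)) := rfl
    have hred2 : E0 b = ((⟦b⟧ : Q), decide (b = (⟦b⟧ : Q).out)) := rfl
    rw [hred1, hred2, hmkj b]
    by_cases hb : b = (⟦b⟧ : Q).out
    · have h2 : j b ≠ (⟦b⟧ : Q).out := fun hc => hjf b (by rw [hc, ← hb])
      rw [decide_eq_false h2, decide_eq_true hb]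
      rfl
    · have h2 : j b = (⟦b⟧ : Q).out := by
        rcases hout b with h | h
        · exact absurd h hb
        · have h3 := congrArg j h
          rw [hj2] at h3
          exact h3
      rw [decide_eq_true h2, decide_eq_false hb]
      rfl
  have hcard : Nat.card β = 2 * Nat.card Q := by
    rw [Nat.card_congr E0, Nat.card_prod, Nat.card_eq_fintype_card (α := Bool),
      Fintype.card_bool, mul_comm]
  refine ⟨Nat.card Q, hcard, ?_⟩
  let E1 : Q ≃ Fin (Nat.card Q) := Finite.equivFin Q
  refine ⟨E0.trans (E1.prodCongr (Equiv.refl Bool)), ?_⟩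
  intro b
  simp only [Equiv.trans_apply, Equiv.prodCongr_apply, flipP_apply]
  rw [hE0 b]
  rfl

end Cube
namespace Cube
variable {n : ℕ}

/-- The bare isomorphism between the centralizer of the flip and `Aut(𝓛ₙ)`. -/
def centToAut (m : ℕ) : centSubgroup (flipP (n := m)) →* autGroup m :=
  MonoidHom.mk' (fun e => ⟨Phi e.1 e.2, isAut_Phi e.1 e.2⟩) (by
    intro e f
    apply Subtype.ext
    exact Phi_mul e.2 f.2)

lemma centToAut_bijective (m : ℕ) : Function.Bijective (centToAut m) := by
  constructor
  · intro e f h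
    have hval : (Phi e.1 e.2 : Cube m ≃o Cube m) = Phi f.1 f.2 := congrArg Subtype.val h
    apply Subtype.ext
    apply Equiv.ext
    intro p
    apply T_injective
    rw [← Phi_T e.1 e.2, ← Phi_T f.1 f.2, hval]
  · rintro ⟨φ, hφ⟩
    refine ⟨⟨ePerm φ, ePerm_mem_cent hφ⟩, ?_⟩
    apply Subtype.ext
    exact Phi_ePerm hφ

noncomputable def centAutEquiv (m : ℕ) : centSubgroup (flipP (n := m)) ≃* autGroup m :=
  MulEquiv.ofBijective (centToAut m) (centToAut_bijective m)

section Main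

variable (P : Set (Set (Cube n)))

/-- The block of coatom indices corresponding to a block `X ∈ P`. -/
def BP (X : ↥P) : Set (Fin n × Bool) := T ⁻¹' (X : Set (Cube n))

lemma mem_BP {X : ↥P} {p : Fin n × Bool} : p ∈ BP P X ↔ T p ∈ (X : Set (Cube n)) :=
  Iff.rfl

variable {P}

lemma X_sub_range (hcov : ⋃₀ P = {x : Cube n | Cube.corank x = 1}) (X : ↥P) :
    (X : Set (Cube n)) ⊆ Set.range (T (n := n)) := by
  intro x hx
  have hx1 : x ∈ ⋃₀ P := ⟨X, X.2, hx⟩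
  rw [hcov] at hx1
  obtain ⟨p, hp⟩ := corank_eq_one_iff_s5.mp hx1
  exact ⟨p, hp⟩

lemma T_image_BP (hcov : ⋃₀ P = {x : Cube n | Cube.corank x = 1}) (X : ↥P) :
    T '' BP P X = X :=
  Set.image_preimage_eq_of_subset (X_sub_range hcov X)

lemma BP_flip (hflip : ∀ X ∈ P, ∀ c ∈ X, Cube.delta ⊤ c ∈ X) (X : ↥P)
    {p : Fin n × Bool} (hp : p ∈ BP P X) : flipP p ∈ BP P X := by
  rw [mem_BP, T_flipP]
  exact hflip X.1 X.2 (T p) hp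

lemma exists_BP (hcov : ⋃₀ P = {x : Cube n | Cube.corank x = 1}) (p : Fin n × Bool) :
    ∃ X : ↥P, p ∈ BP P X := by
  have h1 : T p ∈ ⋃₀ P := by
    rw [hcov]
    exact corank_T p
  obtain ⟨X, hX, hp⟩ := h1
  exact ⟨⟨X, hX⟩, hp⟩

lemma BP_unique (hdisj : ∀ X ∈ P, ∀ Y ∈ P, X ≠ Y → Disjoint X Y) {X Y : ↥P}
    {p : Fin n × Bool} (hX : p ∈ BP P X) (hY : p ∈ BP P Y) : X = Y := by
  by_contra hne
  have hne' : (X : Set (Cube n)) ≠ Y := fun h => hne (Subtype.ext h)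
  exact Set.disjoint_left.mp (hdisj X X.2 Y Y.2 hne') hX hY

variable (P)

/-- The subgroup of flip-commuting permutations stabilizing every block. -/
def centPGroup : Subgroup (Equiv.Perm (Fin n × Bool)) where
  carrier := {e | e ∈ centSubgroup flipP ∧ ∀ X : ↥P, e '' BP P X = BP P X}
  one_mem' := ⟨one_mem _, fun X => by simp⟩
  mul_mem' := by
    rintro e f ⟨he, he'⟩ ⟨hf, hf'⟩
    refine ⟨mul_mem he hf, fun X => ?_⟩
    have h1 : (⇑(e * f) : Fin n × Bool → Fin n × Bool) = ⇑e ∘ ⇑f := rfl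
    rw [h1, Set.image_comp, hf' X, he' X]
  inv_mem' := by
    rintro e ⟨he, he'⟩
    refine ⟨inv_mem he, fun X => ?_⟩
    have h1 : (⇑(e⁻¹ : Equiv.Perm (Fin n × Bool)) : _ → _) = ⇑e.symm := rfl
    rw [h1]
    conv_lhs => rw [← he' X]
    rw [Set.image_image]
    simp

variable {P}

/-- From a block-stabilizing flip-commuting permutation to a block-stabilizing
automorphism. -/
noncomputable def homToAutP (hcov : ⋃₀ P = {x : Cube n | Cube.corank x = 1}) :
    centPGroup P →* autGroupP n P :=
  MonoidHom.mk' (fun e => ⟨Phi e.1 e.2.1, isAut_Phi e.1 e.2.1, by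
    intro X hX
    have h1 : (X : Set (Cube n)) = T '' (BP P ⟨X, hX⟩) := (T_image_BP hcov ⟨X, hX⟩).symm
    rw [h1]
    calc (Phi e.1 e.2.1) '' (T '' BP P ⟨X, hX⟩)
        = (fun p => Phi e.1 e.2.1 (T p)) '' BP P ⟨X, hX⟩ := Set.image_image _ _ _
      _ = (fun p => T (e.1 p)) '' BP P ⟨X, hX⟩ := by
          apply Set.image_congr
          intro p _
          exact Phi_T e.1 e.2.1 p
      _ = T '' (⇑e.1 '' BP P ⟨X, hX⟩) := (Set.image_image _ _ _).symm
      _ = T '' BP P ⟨X, hX⟩ := by rw [e.2.2 ⟨X, hX⟩]⟩) (by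
    intro e f
    apply Subtype.ext
    exact Phi_mul e.2.1 f.2.1)

lemma homToAutP_bijective (hcov : ⋃₀ P = {x : Cube n | Cube.corank x = 1}) :
    Function.Bijective (homToAutP hcov) := by
  constructor
  · intro e f h
    have hval : (Phi e.1 e.2.1 : Cube n ≃o Cube n) = Phi f.1 f.2.1 :=
      congrArg Subtype.val h
    apply Subtype.ext
    apply Equiv.ext
    intro p
    apply T_injective
    rw [← Phi_T e.1 e.2.1, ← Phi_T f.1 f.2.1, hval]
  · rintro ⟨φ, hφ1, hφ2⟩
    have hTe : ∀ S : Set (Fin n × Bool), T '' (⇑(ePerm φ) '' S) = φ '' (T '' S) := by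
      intro S
      rw [Set.image_image, Set.image_image]
      apply Set.image_congr
      intro p _
      exact T_ePerm φ p
    refine ⟨⟨ePerm φ, ePerm_mem_cent hφ1, fun X => ?_⟩, ?_⟩
    · apply Set.image_injective.mpr (T_injective (n := n))
      rw [hTe, T_image_BP hcov X, hφ2 X.1 X.2]
    · apply Subtype.ext
      exact Phi_ePerm hφ1

/-- The flip restricted to a block. -/
def JP (hflip : ∀ X ∈ P, ∀ c ∈ X, Cube.delta ⊤ c ∈ X) (X : ↥P) :
    Equiv.Perm ↥(BP P X) :=
  Equiv.Perm.subtypePerm flipP (fun p => ⟨fun h => by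
    have h2 := BP_flip hflip X h
    rwa [flipP_flipP] at h2, fun h => BP_flip hflip X h⟩)

lemma JP_coe (hflip : ∀ X ∈ P, ∀ c ∈ X, Cube.delta ⊤ c ∈ X) (X : ↥P)
    (q : ↥(BP P X)) : (JP hflip X q : Fin n × Bool) = flipP ↑q := rfl

lemma JP_invol (hflip : ∀ X ∈ P, ∀ c ∈ X, Cube.delta ⊤ c ∈ X) (X : ↥P)
    (q : ↥(BP P X)) : JP hflip X (JP hflip X q) = q := by
  apply Subtype.ext
  rw [JP_coe, JP_coe, flipP_flipP]

lemma JP_ne (hflip : ∀ X ∈ P, ∀ c ∈ X, Cube.delta ⊤ c ∈ X) (X : ↥P)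
    (q : ↥(BP P X)) : JP hflip X q ≠ q := by
  intro h
  have h2 := congrArg (fun z : ↥(BP P X) => (z : Fin n × Bool).2) h
  simp only [JP_coe, flipP_apply] at h2
  exact (Bool.not_ne_self _) h2

end Main

end Cube
namespace Cube
variable {n : ℕ} {P : Set (Set (Cube n))}

lemma centPGroup_iff {e : Equiv.Perm (Fin n × Bool)} {X : ↥P}
    (he : e ∈ centPGroup P) (p : Fin n × Bool) : p ∈ BP P X ↔ e p ∈ BP P X := by
  constructor
  · intro hp
    rw [← he.2 X]
    exact ⟨p, hp, rfl⟩
  · intro hp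
    rw [← he.2 X] at hp
    obtain ⟨q, hq, hqe⟩ := hp
    rwa [← e.injective hqe]

/-- Restriction of a block-stabilizing permutation to the blocks. -/
def resHom (hflip : ∀ X ∈ P, ∀ c ∈ X, Cube.delta ⊤ c ∈ X) :
    centPGroup P →* ((X : ↥P) → centSubgroup (JP hflip X)) :=
  MonoidHom.mk' (fun e X => ⟨e.1.subtypePerm (fun p => (centPGroup_iff e.2 p).symm), by
    intro q
    apply Subtype.ext
    show e.1 (flipP ↑q) = flipP (e.1 ↑q)
    exact e.2.1 ↑q⟩) (by
    intro e f
    funext X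
    apply Subtype.ext
    apply Equiv.ext
    intro q
    apply Subtype.ext
    rfl)

lemma resHom_injective (hcov : ⋃₀ P = {x : Cube n | Cube.corank x = 1})
    (hflip : ∀ X ∈ P, ∀ c ∈ X, Cube.delta ⊤ c ∈ X) :
    Function.Injective (resHom hflip) := by
  intro e f h
  apply Subtype.ext
  apply Equiv.ext
  intro p
  obtain ⟨X, hp⟩ := exists_BP hcov p
  have h1 := congrFun h X
  have h2 := congrArg Subtype.val h1
  have h3 := congrArg (fun ψ : Equiv.Perm ↥(BP P X) => (ψ ⟨p, hp⟩ : Fin n × Bool)) h2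
  exact h3

section Glue

variable (hcov : ⋃₀ P = {x : Cube n | Cube.corank x = 1})
variable (hdisj : ∀ X ∈ P, ∀ Y ∈ P, X ≠ Y → Disjoint X Y)
variable (hflip : ∀ X ∈ P, ∀ c ∈ X, Cube.delta ⊤ c ∈ X)

include hcov in
noncomputable def blkFun (p : Fin n × Bool) : ↥P := (exists_BP hcov p).choose

lemma blkFun_spec (p : Fin n × Bool) : p ∈ BP P (blkFun hcov p) :=
  (exists_BP hcov p).choose_spec

include hdisj in
lemma blkFun_eq {X : ↥P} {p : Fin n × Bool} (hp : p ∈ BP P X) :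
    blkFun hcov p = X :=
  BP_unique hdisj (blkFun_spec hcov p) hp

variable (ψ : (X : ↥P) → ↥(centSubgroup (JP hflip X)))

noncomputable def glueFun (p : Fin n × Bool) : Fin n × Bool :=
  ↑((ψ (blkFun hcov p)).1 ⟨p, blkFun_spec hcov p⟩)

include hdisj in
lemma glueFun_eq {X : ↥P} {p : Fin n × Bool} (hp : p ∈ BP P X) :
    glueFun hcov hflip ψ p = ↑((ψ X).1 ⟨p, hp⟩) := by
  obtain rfl := blkFun_eq hcov hdisj hp
  rfl

lemma glueFun_mem (p : Fin n × Bool) :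
    glueFun hcov hflip ψ p ∈ BP P (blkFun hcov p) :=
  ((ψ (blkFun hcov p)).1 ⟨p, blkFun_spec hcov p⟩).2

include hdisj in
lemma glueFun_bijective : Function.Bijective (glueFun hcov hflip ψ) := by
  constructor
  · intro p q h
    have hXY : blkFun hcov p = blkFun hcov q :=
      BP_unique hdisj (h ▸ glueFun_mem hcov hflip ψ p) (glueFun_mem hcov hflip ψ q)
    have hq : q ∈ BP P (blkFun hcov p) := hXY ▸ blkFun_spec hcov q
    have e1 : glueFun hcov hflip ψ p
        = ↑((ψ (blkFun hcov p)).1 ⟨p, blkFun_spec hcov p⟩) := rfl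
    have e2 : glueFun hcov hflip ψ q = ↑((ψ (blkFun hcov p)).1 ⟨q, hq⟩) :=
      glueFun_eq hcov hdisj hflip ψ hq
    rw [e1, e2] at h
    have h2 := (ψ (blkFun hcov p)).1.injective (Subtype.ext h)
    exact congrArg Subtype.val h2
  · intro r
    set X := blkFun hcov r with hXdef
    set a : Fin n × Bool := ↑(((ψ X).1).symm ⟨r, blkFun_spec hcov r⟩) with hadef
    have ha : a ∈ BP P X := (((ψ X).1).symm ⟨r, blkFun_spec hcov r⟩).2
    refine ⟨a, ?_⟩
    rw [glueFun_eq hcov hdisj hflip ψ ha]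
    have h3 : (⟨a, ha⟩ : ↥(BP P X)) = ((ψ X).1).symm ⟨r, blkFun_spec hcov r⟩ :=
      Subtype.ext rfl
    rw [h3, Equiv.apply_symm_apply]

include hdisj in
noncomputable def glue : Equiv.Perm (Fin n × Bool) :=
  Equiv.ofBijective (glueFun hcov hflip ψ) (glueFun_bijective hcov hdisj hflip ψ)

lemma glue_apply (p : Fin n × Bool) : glue hcov hdisj hflip ψ p = glueFun hcov hflip ψ p :=
  rfl

include hdisj in
lemma glue_mem : glue hcov hdisj hflip ψ ∈ centPGroup P := by
  constructor
  · intro p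
    have hp := blkFun_spec hcov p
    have hfp : flipP p ∈ BP P (blkFun hcov p) := BP_flip hflip _ hp
    rw [glue_apply, glue_apply, glueFun_eq hcov hdisj hflip ψ hfp]
    have h1 : (⟨flipP p, hfp⟩ : ↥(BP P (blkFun hcov p)))
        = JP hflip (blkFun hcov p) ⟨p, hp⟩ := Subtype.ext rfl
    rw [h1, (ψ (blkFun hcov p)).2 ⟨p, hp⟩]
    rfl
  · intro X
    apply Set.Subset.antisymm
    · rintro r ⟨p, hp, rfl⟩
      rw [glue_apply, glueFun_eq hcov hdisj hflip ψ hp]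
      exact ((ψ X).1 ⟨p, hp⟩).2
    · intro r hr
      set a : Fin n × Bool := ↑(((ψ X).1).symm ⟨r, hr⟩) with hadef
      have ha : a ∈ BP P X := (((ψ X).1).symm ⟨r, hr⟩).2
      refine ⟨a, ha, ?_⟩
      rw [glue_apply, glueFun_eq hcov hdisj hflip ψ ha]
      have h3 : (⟨a, ha⟩ : ↥(BP P X)) = ((ψ X).1).symm ⟨r, hr⟩ := Subtype.ext rfl
      rw [h3, Equiv.apply_symm_apply]

include hdisj in
lemma resHom_glue : resHom hflip ⟨glue hcov hdisj hflip ψ, glue_mem hcov hdisj hflip ψ⟩ = ψ := by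
  funext X
  apply Subtype.ext
  apply Equiv.ext
  intro q
  apply Subtype.ext
  show glue hcov hdisj hflip ψ ↑q = ↑((ψ X).1 q)
  rw [glue_apply, glueFun_eq hcov hdisj hflip ψ q.2]

end Glue

lemma resHom_surjective (hcov : ⋃₀ P = {x : Cube n | Cube.corank x = 1})
    (hdisj : ∀ X ∈ P, ∀ Y ∈ P, X ≠ Y → Disjoint X Y)
    (hflip : ∀ X ∈ P, ∀ c ∈ X, Cube.delta ⊤ c ∈ X) :
    Function.Surjective (resHom hflip) := fun ψ =>
  ⟨⟨glue hcov hdisj hflip ψ, glue_mem hcov hdisj hflip ψ⟩, resHom_glue hcov hdisj hflip ψ⟩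

end Cube

/-- If `P` is a partition of the coatoms of `𝓛ₙ` whose blocks are closed under
the sign-flip `c ↦ Δ(𝟙, c)`, then the group of automorphisms of `𝓛ₙ`
stabilizing every block is isomorphic to `∏_{X ∈ P} Aut(𝓛_{|X|/2})`. -/
theorem autGroupP_iso_prod (n : ℕ) (P : Set (Set (Cube n)))
    (hcov : ⋃₀ P = {x : Cube n | Cube.corank x = 1})
    (hdisj : ∀ X ∈ P, ∀ Y ∈ P, X ≠ Y → Disjoint X Y)
    (hne : ∀ X ∈ P, X.Nonempty)
    (hflip : ∀ X ∈ P, ∀ c ∈ X, Cube.delta ⊤ c ∈ X) :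
    Nonempty
      ((Cube.autGroupP n P) ≃*
        ((X : P) → Cube.autGroup ((X : Set (Cube n)).ncard / 2))) := by
  classical
  refine ⟨?_⟩
  have step : ∀ X : ↥P,
      Nonempty (Cube.centSubgroup (Cube.JP hflip X) ≃*
        Cube.autGroup ((X : Set (Cube n)).ncard / 2)) := by
    intro X
    obtain ⟨m, hm, E, hE⟩ :=
      Cube.exists_equivariant (Cube.JP hflip X) (Cube.JP_invol hflip X) (Cube.JP_ne hflip X)
    have hcard : Nat.card ↥(Cube.BP P X) = (X : Set (Cube n)).ncard := by
      rw [Nat.card_coe_set_eq]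
      rw [← Cube.T_image_BP hcov X, Set.ncard_image_of_injective _ Cube.T_injective]
    have hm2 : m = (X : Set (Cube n)).ncard / 2 := by omega
    refine ⟨(Cube.centCongr (Cube.JP hflip X) Cube.flipP
      (E.trans (Equiv.prodCongr (finCongr hm2) (Equiv.refl Bool))) ?_).trans
      (Cube.centAutEquiv _)⟩
    intro b
    rw [Equiv.trans_apply, Equiv.trans_apply, hE b]
    rfl
  exact ((MulEquiv.ofBijective (Cube.homToAutP hcov)
      (Cube.homToAutP_bijective hcov)).symm.trans
    ((MulEquiv.ofBijective (Cube.resHom hflip)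
        ⟨Cube.resHom_injective hcov hflip, Cube.resHom_surjective hcov hdisj hflip⟩).trans
      (MulEquiv.piCongrRight (fun X => (step X).some))))
end
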